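/- Let G be a connected graph with maximum degree 3 such that the set of vertices of degree 3 forms an independent set. If G contains a triangle or K_{2,3} as a subgraph, then pd(G) = 2; otherwise pd(G) = 1. -/

import Mathlib

open SimpleGraph

variable {V : Type*}

/-- Two edges are adjacent: distinct and sharing an endpoint. -/
def EdgesAdj (e₁ e₂ : Sym2 V) : Prop := e₁ ≠ e₂ ∧ ∃ v, v ∈ e₁ ∧ v ∈ e₂

/-- `F` is an edge-cut of `G` separating `x` and `y`. -/
def IsSepCut (G : SimpleGraph V) (F : Set (Sym2 V)) (x y : V) : Prop :=
  F ⊆ G.edgeSet ∧ ¬ (G.deleteEdges F).Reachable x y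

/-- `F` is a proper edge-cut (w.r.t. edge-coloring `c`) separating `x` and `y`. -/
def IsProperSepCut (G : SimpleGraph V) (c : Sym2 V → ℕ) (F : Set (Sym2 V)) (x y : V) : Prop :=
  IsSepCut G F x y ∧ ∀ e₁ ∈ F, ∀ e₂ ∈ F, EdgesAdj e₁ e₂ → c e₁ ≠ c e₂

/-- `F` is a rainbow edge-cut separating `x` and `y`. -/
def IsRainbowSepCut (G : SimpleGraph V) (c : Sym2 V → ℕ) (F : Set (Sym2 V)) (x y : V) : Prop :=
  IsSepCut G F x y ∧ Set.InjOn c F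

/-- `F` is a matching cut separating `x` and `y`. -/
def IsMatchingSepCut (G : SimpleGraph V) (F : Set (Sym2 V)) (x y : V) : Prop :=
  IsSepCut G F x y ∧ ∀ e₁ ∈ F, ∀ e₂ ∈ F, ¬ EdgesAdj e₁ e₂

/-- The proper disconnection number. -/
noncomputable def pd (G : SimpleGraph V) : ℕ :=
  sInf {k | ∃ c : Sym2 V → ℕ, (∀ e ∈ G.edgeSet, c e < k) ∧
    ∀ x y : V, x ≠ y → ∃ F, IsProperSepCut G c F x y}

/-- The rainbow disconnection number. -/
noncomputable def rd (G : SimpleGraph V) : ℕ :=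
  sInf {k | ∃ c : Sym2 V → ℕ, (∀ e ∈ G.edgeSet, c e < k) ∧
    ∀ x y : V, x ≠ y → ∃ F, IsRainbowSepCut G c F x y}

/-- The chromatic index. -/
noncomputable def chromIndex (G : SimpleGraph V) : ℕ :=
  sInf {k | ∃ c : Sym2 V → ℕ, (∀ e ∈ G.edgeSet, c e < k) ∧
    ∀ e₁ ∈ G.edgeSet, ∀ e₂ ∈ G.edgeSet, EdgesAdj e₁ e₂ → c e₁ ≠ c e₂}

/-- `G` contains a triangle. -/
def HasTriangle {V : Type*} (G : SimpleGraph V) : Prop :=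
  ∃ a b c : V, G.Adj a b ∧ G.Adj b c ∧ G.Adj a c

/-- `G` contains `K_{2,3}` as a subgraph. -/
def HasK23 {V : Type*} (G : SimpleGraph V) : Prop :=
  ∃ f : (Fin 2 ⊕ Fin 3) ↪ V,
    ∀ a b, (completeBipartiteGraph (Fin 2) (Fin 3)).Adj a b → G.Adj (f a) (f b)

section helpers
variable {G : SimpleGraph V}

/-- key sep-cut lemma -/
lemma sepCut_of_cross (S : Set V) (F : Set (Sym2 V)) (hF : F ⊆ G.edgeSet)
    (hcross : ∀ u w, G.Adj u w → u ∈ S → w ∉ S → s(u, w) ∈ F)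
    {x y : V} (hx : x ∈ S) (hy : y ∉ S) : IsSepCut G F x y := by
  refine ⟨hF, fun hr => ?_⟩
  obtain ⟨p⟩ := hr
  have : ∀ {a b : V}, (G.deleteEdges F).Walk a b → a ∈ S → b ∈ S := by
    intro a b p
    induction p with
    | nil => exact id
    | @cons u v w h p ih =>
      intro ha
      have h' : G.Adj u v ∧ ¬ s(u,v) ∈ F := (SimpleGraph.deleteEdges_adj ..).1 h
      by_cases hv : v ∈ S
      · exact ih hv
      · exact absurd (hcross u v h'.1 ha hv) h'.2
  exact hy (this p hx)

lemma reach_symm_not {x y : V} (h : ¬ (G.deleteEdges F).Reachable x y) :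
    ¬ (G.deleteEdges F).Reachable y x := fun hr => h hr.symm

section deg
variable [Fintype V] [DecidableRel G.Adj]

lemma two_le_degree {x a b : V} (ha : G.Adj x a) (hb : G.Adj x b) (hab : a ≠ b) :
    2 ≤ G.degree x := by
  classical
  have : ({a, b} : Finset V) ⊆ G.neighborFinset x := by
    intro t ht
    simp only [Finset.mem_insert, Finset.mem_singleton] at ht
    rcases ht with rfl | rfl <;> simp [SimpleGraph.mem_neighborFinset, ha, hb]
  calc 2 = ({a, b} : Finset V).card := by rw [Finset.card_insert_of_notMem (by simpa using hab), Finset.card_singleton]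
  _ ≤ _ := Finset.card_le_card this
  _ = G.degree x := (G.card_neighborFinset_eq_degree x)

lemma three_le_degree {x a b c : V} (ha : G.Adj x a) (hb : G.Adj x b) (hc : G.Adj x c)
    (hab : a ≠ b) (hac : a ≠ c) (hbc : b ≠ c) : 3 ≤ G.degree x := by
  classical
  have : ({a, b, c} : Finset V) ⊆ G.neighborFinset x := by
    intro t ht
    simp only [Finset.mem_insert, Finset.mem_singleton] at ht
    rcases ht with rfl | rfl | rfl <;> simp [SimpleGraph.mem_neighborFinset, ha, hb, hc]
  have hcard : ({a, b, c} : Finset V).card = 3 := by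
    rw [Finset.card_insert_of_notMem (by simp [hab, hac]),
      Finset.card_insert_of_notMem (by simpa using hbc), Finset.card_singleton]
  calc 3 = ({a,b,c} : Finset V).card := hcard.symm
  _ ≤ _ := Finset.card_le_card this
  _ = G.degree x := (G.card_neighborFinset_eq_degree x)

/-- enumeration of neighbors for a degree-≤2 vertex -/
lemma nbr_eq_of_deg_le_two {x a b w : V} (hdeg : G.degree x ≤ 2)
    (ha : G.Adj x a) (hb : G.Adj x b) (hab : a ≠ b) (hw : G.Adj x w) : w = a ∨ w = b := by
  classical
  by_contra hcon
  push_neg at hcon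
  exact absurd (three_le_degree ha hb hw hab (Ne.symm hcon.1) (Ne.symm hcon.2)) (by omega)

lemma nbr_eq_of_deg_le_one {x a w : V} (hdeg : G.degree x ≤ 1)
    (ha : G.Adj x a) (hw : G.Adj x w) : w = a := by
  classical
  by_contra hcon
  exact absurd (two_le_degree ha hw (Ne.symm hcon)) (by omega)

lemma nbr_eq_of_deg_le_three {x a b c w : V} (hdeg : G.degree x ≤ 3)
    (ha : G.Adj x a) (hb : G.Adj x b) (hc : G.Adj x c)
    (hab : a ≠ b) (hac : a ≠ c) (hbc : b ≠ c) (hw : G.Adj x w) : w = a ∨ w = b ∨ w = c := by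
  classical
  by_contra hcon
  push_neg at hcon
  have : ({a, b, c, w} : Finset V) ⊆ G.neighborFinset x := by
    intro t ht
    simp only [Finset.mem_insert, Finset.mem_singleton] at ht
    rcases ht with rfl | rfl | rfl | rfl <;> simp [SimpleGraph.mem_neighborFinset, ha, hb, hc, hw]
  have hcard : ({a, b, c, w} : Finset V).card = 4 := by
    rw [Finset.card_insert_of_notMem (by simp [hab, hac, hcon.1.symm]),
      Finset.card_insert_of_notMem (by simp [hbc, hcon.2.1.symm]),
      Finset.card_insert_of_notMem (by simpa using hcon.2.2.symm), Finset.card_singleton]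
  have := Finset.card_le_card this
  rw [hcard, G.card_neighborFinset_eq_degree x] at this
  omega

end deg
end helpers

section lower
variable {G : SimpleGraph V}

lemma edge_mem_of_sep {F : Set (Sym2 V)} {a b : V} (hab : G.Adj a b)
    (hnr : ¬ (G.deleteEdges F).Reachable a b) : s(a, b) ∈ F := by
  by_contra h
  exact hnr (SimpleGraph.Adj.reachable (by simp [hab, h]))

lemma edge_mem_of_sep2 {F : Set (Sym2 V)} {a b c : V} (hac : G.Adj a c) (hcb : G.Adj c b)
    (hnr : ¬ (G.deleteEdges F).Reachable a b) : s(a, c) ∈ F ∨ s(c, b) ∈ F := by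
  by_contra h
  push_neg at h
  exact hnr ((SimpleGraph.Adj.reachable (by simp [hac, h.1] : (G.deleteEdges F).Adj a c)).trans
    (SimpleGraph.Adj.reachable (by simp [hcb, h.2])))

lemma edgesAdj_left {a b c : V} (hbc : b ≠ c) : EdgesAdj s(a, b) s(a, c) := by
  constructor
  · intro h
    rw [Sym2.eq_iff] at h
    rcases h with ⟨_, rfl⟩ | ⟨rfl, rfl⟩
    · exact hbc rfl
    · exact hbc rfl
  · exact ⟨a, by simp, by simp⟩

lemma edgesAdj_right {a b c : V} (hbc : b ≠ c) : EdgesAdj s(b, a) s(c, a) := by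
  constructor
  · intro h
    rw [Sym2.eq_iff] at h
    rcases h with ⟨rfl, _⟩ | ⟨rfl, rfl⟩
    · exact hbc rfl
    · exact hbc rfl
  · exact ⟨a, by simp, by simp⟩

lemma one_not_mem_triangle (htri : HasTriangle G)
    (h : ∃ c : Sym2 V → ℕ, (∀ e ∈ G.edgeSet, c e < 1) ∧
      ∀ x y : V, x ≠ y → ∃ F, IsProperSepCut G c F x y) : False := by
  obtain ⟨a, b, c, hab, hbc, hac⟩ := htri
  obtain ⟨col, hcol, hcut⟩ := h
  obtain ⟨F, ⟨hFE, hnr⟩, hprop⟩ := hcut a b hab.ne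
  have h1 : s(a, b) ∈ F := edge_mem_of_sep hab hnr
  have h2 := edge_mem_of_sep2 hac (hbc.symm) hnr
  have hcz : ∀ e ∈ F, col e = 0 := fun e he => Nat.lt_one_iff.1 (hcol e (hFE he))
  rcases h2 with h2 | h2
  · exact hprop _ h1 _ h2 (edgesAdj_left hbc.ne) (by rw [hcz _ h1, hcz _ h2])
  · have : EdgesAdj s(a, b) s(c, b) := edgesAdj_right (fun h => (hac.ne h).elim)
    exact hprop _ h1 _ h2 this (by rw [hcz _ h1, hcz _ h2])

lemma one_not_mem_K23 (hk : HasK23 G)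
    (h : ∃ c : Sym2 V → ℕ, (∀ e ∈ G.edgeSet, c e < 1) ∧
      ∀ x y : V, x ≠ y → ∃ F, IsProperSepCut G c F x y) : False := by
  obtain ⟨f, hf⟩ := hk
  obtain ⟨col, hcol, hcut⟩ := h
  set x := f (Sum.inl 0) with hx
  set y := f (Sum.inl 1) with hy
  have hxy : x ≠ y := fun h => by simpa using f.injective h
  have hadjx : ∀ i : Fin 3, G.Adj x (f (Sum.inr i)) := fun i => hf _ _ (by simp)
  have hadjy : ∀ i : Fin 3, G.Adj y (f (Sum.inr i)) := fun i => hf _ _ (by simp)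
  obtain ⟨F, ⟨hFE, hnr⟩, hprop⟩ := hcut x y hxy
  have hcz : ∀ e ∈ F, col e = 0 := fun e he => Nat.lt_one_iff.1 (hcol e (hFE he))
  have hchoice : ∀ i : Fin 3, s(x, f (Sum.inr i)) ∈ F ∨ s(f (Sum.inr i), y) ∈ F :=
    fun i => edge_mem_of_sep2 (hadjx i) (hadjy i).symm hnr
  classical
  set g : Fin 3 → Bool := fun i => if s(x, f (Sum.inr i)) ∈ F then true else false with hg
  obtain ⟨i, j, hij, hgij⟩ := Fintype.exists_ne_map_eq_of_card_lt g (by simp)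
  have huij : f (Sum.inr i) ≠ f (Sum.inr j) := fun h => hij (by simpa using f.injective h)
  by_cases hi : s(x, f (Sum.inr i)) ∈ F
  · have hj : s(x, f (Sum.inr j)) ∈ F := by
      by_contra hj
      simp [hg, hi, hj] at hgij
    exact hprop _ hi _ hj (edgesAdj_left huij) (by rw [hcz _ hi, hcz _ hj])
  · have hj : ¬ s(x, f (Sum.inr j)) ∈ F := by
      by_contra hj
      simp [hg, hi, hj] at hgij
    have hi' := (hchoice i).resolve_left hi
    have hj' := (hchoice j).resolve_left hj
    exact hprop _ hi' _ hj' (edgesAdj_right huij) (by rw [hcz _ hi', hcz _ hj'])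

end lower

def TwoNbrs (G : SimpleGraph V) (v : V) : Prop := ∃ a b, a ≠ b ∧ G.Adj v a ∧ G.Adj v b

def ThreeNbrs (G : SimpleGraph V) (v : V) : Prop :=
  ∃ a b c, a ≠ b ∧ a ≠ c ∧ b ≠ c ∧ G.Adj v a ∧ G.Adj v b ∧ G.Adj v c

def Bi (G : SimpleGraph V) (c : Sym2 V → Bool) (v : V) : Prop :=
  ∃ a b, G.Adj v a ∧ G.Adj v b ∧ c s(v, a) ≠ c s(v, b)

def HasCol (G : SimpleGraph V) (c : Sym2 V → Bool) (v : V) (b : Bool) : Prop :=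
  ∃ a, G.Adj v a ∧ c s(v, a) = b

/-- Goodness package of conclusions. -/
def GoodCol (G : SimpleGraph V) (W : V → Option Bool) (c : Sym2 V → Bool) : Prop :=
  (∀ v, W v = none → TwoNbrs G v → Bi G c v) ∧
  (∀ v b, W v = some b → (∃ a, G.Adj v a) → HasCol G c v b) ∧
  (∀ v b, W v = some b → ThreeNbrs G v → Bi G c v)

section colorlemma
variable {G : SimpleGraph V}

lemma bi_hasCol {c : Sym2 V → Bool} {v : V} (h : Bi G c v) (b : Bool) : HasCol G c v b := by
  obtain ⟨a₁, a₂, h₁, h₂, hne⟩ := h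
  by_cases hb : c s(v, a₁) = b
  · exact ⟨a₁, h₁, hb⟩
  · refine ⟨a₂, h₂, ?_⟩
    revert hne hb
    cases c s(v, a₁) <;> cases c s(v, a₂) <;> cases b <;> simp

lemma sym2_ne_of_ne {v a w u : V} (h1 : v ≠ w) (h2 : v ≠ u) : s(v, a) ≠ s(w, u) := by
  intro hcon
  rw [Sym2.eq_iff] at hcon
  rcases hcon with ⟨rfl, rfl⟩ | ⟨rfl, rfl⟩
  exacts [h1 rfl, h2 rfl]

lemma reach_split {w u v d : V} (h : G.Reachable v d) :
    (G.deleteEdges {s(w, u)}).Reachable v d ∨ (G.deleteEdges {s(w, u)}).Reachable v w ∨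
      (G.deleteEdges {s(w, u)}).Reachable v u := by
  obtain ⟨p⟩ := h
  induction p with
  | nil => exact Or.inl (Reachable.refl _)
  | @cons a b c h p ih =>
    by_cases he : s(a, b) = s(w, u)
    · rw [Sym2.eq_iff] at he
      rcases he with ⟨rfl, rfl⟩ | ⟨rfl, rfl⟩
      · exact Or.inr (Or.inl (Reachable.refl _))
      · exact Or.inr (Or.inr (Reachable.refl _))
    · have hadj : (G.deleteEdges {s(w, u)}).Adj a b := by simp [h, he]
      rcases ih with h' | h' | h'
      · exact Or.inl (hadj.reachable.trans h')
      · exact Or.inr (Or.inl (hadj.reachable.trans h'))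
      · exact Or.inr (Or.inr (hadj.reachable.trans h'))

open Classical in
noncomputable def updCol (e₀ : Sym2 V) (z : Bool) (c' : Sym2 V → Bool) : Sym2 V → Bool :=
  fun e => if e = e₀ then z else c' e

lemma updCol_self {e₀ : Sym2 V} {z : Bool} {c' : Sym2 V → Bool} : updCol e₀ z c' e₀ = z := by
  simp [updCol]

lemma updCol_ne {e₀ e : Sym2 V} {z : Bool} {c' : Sym2 V → Bool} (h : e ≠ e₀) :
    updCol e₀ z c' e = c' e := by
  simp [updCol, h]

section transfer
variable {w u : V} {c' : Sym2 V → Bool} {z : Bool}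

lemma adj_del_iff {e₀ : Sym2 V} {v a : V} :
    (G.deleteEdges {e₀}).Adj v a ↔ G.Adj v a ∧ s(v, a) ≠ e₀ := by simp

lemma adj_del_of_ne {v a : V} (h : G.Adj v a) (hv : v ≠ w) (hv' : v ≠ u) :
    (G.deleteEdges {s(w, u)}).Adj v a := by
  simp [h, sym2_ne_of_ne hv hv']

/-- the modified coloring agrees on surviving edges -/
lemma col_transfer {e₀ : Sym2 V} {v a : V} (h : (G.deleteEdges {e₀}).Adj v a) :
    updCol e₀ z c' s(v, a) = c' s(v, a) := by
  rw [adj_del_iff] at h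
  exact updCol_ne h.2

lemma bi_transfer {e₀ : Sym2 V} {v : V} (h : Bi (G.deleteEdges {e₀}) c' v) :
    Bi G (updCol e₀ z c') v := by
  obtain ⟨a₁, a₂, h₁, h₂, hne⟩ := h
  exact ⟨a₁, a₂, h₁.1, h₂.1, by rwa [col_transfer h₁, col_transfer h₂]⟩

lemma hasCol_transfer {e₀ : Sym2 V} {v : V} {b : Bool}
    (h : HasCol (G.deleteEdges {e₀}) c' v b) :
    HasCol G (updCol e₀ z c') v b := by
  obtain ⟨a, ha, hc⟩ := h
  exact ⟨a, ha.1, by rwa [col_transfer ha]⟩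

lemma twoNbrs_del (hv : v ≠ w) (hv' : v ≠ u) (h : TwoNbrs G v) :
    TwoNbrs (G.deleteEdges {s(w, u)}) v := by
  obtain ⟨a₁, a₂, hne, h₁, h₂⟩ := h
  exact ⟨a₁, a₂, hne, adj_del_of_ne h₁ hv hv', adj_del_of_ne h₂ hv hv'⟩

lemma threeNbrs_del (hv : v ≠ w) (hv' : v ≠ u) (h : ThreeNbrs G v) :
    ThreeNbrs (G.deleteEdges {s(w, u)}) v := by
  obtain ⟨a₁, a₂, a₃, hne1, hne2, hne3, h₁, h₂, h₃⟩ := h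
  exact ⟨a₁, a₂, a₃, hne1, hne2, hne3, adj_del_of_ne h₁ hv hv', adj_del_of_ne h₂ hv hv',
    adj_del_of_ne h₃ hv hv'⟩

/-- a vertex with two distinct neighbours keeps an edge after deleting s(w,u), provided
it is distinct from w and u is the vertex itself: specialised to v = u -/
lemma exists_del_edge_at_u (huw : u ≠ w) (h : TwoNbrs G u) :
    ∃ a, (G.deleteEdges {s(w, u)}).Adj u a := by
  obtain ⟨a₁, a₂, hne, h₁, h₂⟩ := h
  by_cases ha : a₁ = w
  · subst ha
    refine ⟨a₂, ?_⟩
    rw [adj_del_iff]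
    refine ⟨h₂, fun hcon => ?_⟩
    rw [Sym2.eq_iff] at hcon
    rcases hcon with ⟨rfl, rfl⟩ | ⟨-, rfl⟩
    · exact huw rfl
    · exact hne rfl
  · refine ⟨a₁, ?_⟩
    rw [adj_del_iff]
    refine ⟨h₁, fun hcon => ?_⟩
    rw [Sym2.eq_iff] at hcon
    rcases hcon with ⟨rfl, rfl⟩ | ⟨-, rfl⟩
    · exact huw rfl
    · exact ha rfl

lemma exists_del_edge_at_w {f : V} (hwf : G.Adj w f) (hfu : f ≠ u) :
    ∃ a, (G.deleteEdges {s(w, u)}).Adj w a := by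
  refine ⟨f, ?_⟩
  rw [adj_del_iff]
  refine ⟨hwf, fun hcon => ?_⟩
  rw [Sym2.eq_iff] at hcon
  rcases hcon with ⟨-, rfl⟩ | ⟨rfl, rfl⟩
  · exact hfu rfl
  · exact hwf.ne rfl

end transfer
end colorlemma

/-- Main coloring existence lemma, by strong induction on the number of edges. -/
lemma goodCol_exists [Fintype V] :
    ∀ (n : ℕ) (G : SimpleGraph V), G.edgeSet.ncard ≤ n →
    ∀ W : V → Option Bool,
    (∀ v w, v ≠ w → W v ≠ none → W w ≠ none → ¬ G.Reachable v w) →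
    (∀ v, ∃ d, W d ≠ none ∧ G.Reachable v d) →
    ∃ c : Sym2 V → Bool, GoodCol G W c := by
  intro n
  induction n with
  | zero =>
    intro G hcard W _ _
    have hE : G.edgeSet = ∅ := by
      have : G.edgeSet.ncard = 0 := Nat.le_zero.1 hcard
      exact (Set.ncard_eq_zero (Set.toFinite _)).1 this
    refine ⟨fun _ => false, ?_, ?_, ?_⟩
    · rintro v - ⟨a, b, -, h, -⟩
      exact absurd (G.mem_edgeSet.2 h) (by simp [hE])
    · rintro v b - ⟨a, h⟩
      exact absurd (G.mem_edgeSet.2 h) (by simp [hE])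
    · rintro v b - ⟨a, a', a'', -, -, -, h, -⟩
      exact absurd (G.mem_edgeSet.2 h) (by simp [hE])
  | succ n IH =>
    intro G hcard W ha hb
    by_cases hE : G.edgeSet = ∅
    · refine ⟨fun _ => false, ?_, ?_, ?_⟩
      · rintro v - ⟨a, b, -, h, -⟩
        exact absurd (G.mem_edgeSet.2 h) (by simp [hE])
      · rintro v b - ⟨a, h⟩
        exact absurd (G.mem_edgeSet.2 h) (by simp [hE])
      · rintro v b - ⟨a, a', a'', -, -, -, h, -⟩
        exact absurd (G.mem_edgeSet.2 h) (by simp [hE])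
    -- find a demanded vertex w with an edge
    obtain ⟨e₁, he₁⟩ := Set.nonempty_iff_ne_empty.2 hE
    obtain ⟨v₀, u₀⟩ := e₁
    rw [SimpleGraph.mem_edgeSet] at he₁
    obtain ⟨d, hd, hreach⟩ := hb v₀
    have hdedge : ∃ a, G.Adj d a := by
      obtain ⟨p⟩ := hreach.symm
      cases p with
      | nil => exact ⟨u₀, he₁⟩
      | cons h p => exact ⟨_, h⟩

    classical
    obtain ⟨b, hbW⟩ := Option.ne_none_iff_exists'.1 hd
    obtain ⟨u, hwu⟩ := hdedge
    have hdu : d ≠ u := hwu.ne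
    set e₀ : Sym2 V := s(d, u) with he₀
    have he₀E : e₀ ∈ G.edgeSet := hwu
    set G' := G.deleteEdges {e₀} with hG'
    have hmono : ∀ {x y : V}, G'.Reachable x y → G.Reachable x y :=
      fun h => h.mono (G.deleteEdges_le _)
    have hcard' : G'.edgeSet.ncard ≤ n := by
      rw [hG', edgeSet_deleteEdges]
      have := Set.ncard_diff_singleton_lt_of_mem he₀E (Set.toFinite _)
      omega
    have hWu : W u = none := by
      by_contra hcon
      exact ha u d (Ne.symm hdu) hcon hd (hwu.symm.reachable)
    -- u is not reachable in G' from any demanded vertex other than d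
    have hkey : ∀ v', v' ≠ d → W v' ≠ none → ¬ G'.Reachable u v' := by
      intro v' hv'd hv' hr
      exact ha d v' (Ne.symm hv'd) hd hv' ((hwu.reachable).trans (hmono hr))
    by_cases hone : ∀ z, G.Adj d z → z = u
    · -- d has degree one; its unique edge goes to u
      have hiso : ∀ z, ¬ G'.Adj d z := by
        intro z hz
        rw [hG', adj_del_iff] at hz
        exact hz.2 (by rw [he₀, hone z hz.1])
      have hdr : ∀ z, G'.Reachable d z → d = z := by
        intro z hr
        obtain ⟨p⟩ := hr
        cases p with
        | nil => rfl
        | cons h p => exact absurd h (hiso _)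
      set W' : V → Option Bool := fun v => if v = u then some (!b) else W v with hW'
      have hW'u : W' u = some (!b) := by simp [hW']
      have hW'o : ∀ v, v ≠ u → W' v = W v := by intro v hv; simp [hW', hv]
      have ha' : ∀ v v', v ≠ v' → W' v ≠ none → W' v' ≠ none → ¬ G'.Reachable v v' := by
        intro v v' hne hv hv' hr
        by_cases h1 : v = u
        · obtain rfl := h1.symm
          by_cases h2 : v' = d
          · obtain rfl := h2.symm; exact hdu (hdr _ hr.symm)
          · exact hkey v' h2 (by rwa [hW'o v' (Ne.symm hne)] at hv') hr
        · rw [hW'o v h1] at hv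
          by_cases h2 : v' = u
          · obtain rfl := h2.symm
            by_cases h3 : v = d
            · obtain rfl := h3.symm; exact hdu (hdr _ hr)
            · exact hkey v h3 hv hr.symm
          · rw [hW'o v' h2] at hv'
            exact ha v v' hne hv hv' (hmono hr)
      have hb' : ∀ v, ∃ d', W' d' ≠ none ∧ G'.Reachable v d' := by
        intro v
        obtain ⟨d', hd', hr⟩ := hb v
        rcases reach_split (w := d) (u := u) hr with h | h | h
        · refine ⟨d', ?_, h⟩
          by_cases hx : d' = u
          · rw [hx, hW'u]; simp
          · rwa [hW'o d' hx]
        · exact ⟨d, by rw [hW'o d hdu]; exact hd, h⟩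
        · exact ⟨u, by rw [hW'u]; simp, h⟩
      obtain ⟨c', hc1, hc2, hc3⟩ := IH G' hcard' W' ha' hb'
      refine ⟨updCol e₀ b c', ?_, ?_, ?_⟩
      · intro v hv htwo
        by_cases h1 : v = u
        · obtain rfl := h1.symm
          obtain ⟨a, hadj'⟩ := exists_del_edge_at_u (G := G) hwu.ne' htwo
          obtain ⟨a', hadj'', hcol⟩ := hc2 _ (!b) hW'u ⟨a, hadj'⟩
          refine ⟨a', d, (adj_del_iff.1 hadj'').1, hwu.symm, ?_⟩
          rw [col_transfer hadj'', hcol]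
          have : s(u, d) = e₀ := by rw [he₀, Sym2.eq_swap]
          rw [this, updCol_self]
          simp
        · have h2 : v ≠ d := by rintro rfl; rw [hv] at hd; exact hd rfl
          exact bi_transfer (hc1 v (by rw [hW'o v h1]; exact hv) (twoNbrs_del h2 h1 htwo))
      · intro v β hvW hedge
        by_cases h1 : v = d
        · obtain rfl := h1.symm
          rw [hbW] at hvW
          injection hvW with hvW
          obtain rfl := hvW.symm
          exact ⟨u, hwu, updCol_self⟩
        · have h2 : v ≠ u := by rintro rfl; rw [hWu] at hvW; exact nomatch hvW
          obtain ⟨a, haa⟩ := hedge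
          exact hasCol_transfer (hc2 v β (by rw [hW'o v h2]; exact hvW)
            ⟨a, adj_del_of_ne haa h1 h2⟩)
      · intro v β hvW hthree
        by_cases h1 : v = d
        · obtain rfl := h1.symm
          obtain ⟨a₁, a₂, a₃, h12, h13, h23, k1, k2, k3⟩ := hthree
          exact absurd ((hone a₁ k1).trans (hone a₂ k2).symm) h12
        · have h2 : v ≠ u := by rintro rfl; rw [hWu] at hvW; exact nomatch hvW
          exact bi_transfer (hc3 v β (by rw [hW'o v h2]; exact hvW) (threeNbrs_del h1 h2 hthree))
    · push_neg at hone
      obtain ⟨f, hdf, hfu⟩ := hone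
      have hedgew' : ∃ a, G'.Adj d a := exists_del_edge_at_w hdf hfu
      by_cases hru : G'.Reachable d u
      · -- w-u still connected after deletion
        by_cases hth : ∃ f' g, f' ≠ u ∧ g ≠ u ∧ f' ≠ g ∧ G.Adj d f' ∧ G.Adj d g
        · -- d has ≥ 3 neighbours: undemand d, demand u
          obtain ⟨f', g, hf'u, hgu, hf'g, hdf', hdg⟩ := hth
          set W' : V → Option Bool := fun v =>
            if v = u then some true else if v = d then none else W v with hW'
          have hW'u : W' u = some true := by simp [hW']
          have hW'd : W' d = none := by simp [hW', hdu.symm, hdu]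
          have hW'o : ∀ v, v ≠ u → v ≠ d → W' v = W v := by
            intro v hv hv2; simp [hW', hv, hv2]
          have ha' : ∀ v v', v ≠ v' → W' v ≠ none → W' v' ≠ none → ¬ G'.Reachable v v' := by
            intro v v' hne hv hv' hr
            have hvd : v ≠ d := by rintro rfl; rw [hW'd] at hv; exact hv rfl
            have hv'd : v' ≠ d := by rintro rfl; rw [hW'd] at hv'; exact hv' rfl
            by_cases h1 : v = u
            · obtain rfl := h1.symm
              exact hkey v' hv'd (by rwa [hW'o v' (Ne.symm hne) hv'd] at hv') hr
            · rw [hW'o v h1 hvd] at hv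
              by_cases h2 : v' = u
              · obtain rfl := h2.symm
                exact hkey v hvd hv hr.symm
              · rw [hW'o v' h2 hv'd] at hv'
                exact ha v v' hne hv hv' (hmono hr)
          have hb' : ∀ v, ∃ d', W' d' ≠ none ∧ G'.Reachable v d' := by
            intro v
            obtain ⟨d', hd', hr⟩ := hb v
            rcases reach_split (w := d) (u := u) hr with h | h | h
            · by_cases hx : d' = d
              · exact ⟨u, by rw [hW'u]; simp, (hx ▸ h).trans hru⟩
              · refine ⟨d', ?_, h⟩
                by_cases hy : d' = u
                · rw [hy, hW'u]; simp
                · rwa [hW'o d' hy hx]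
            · exact ⟨u, by rw [hW'u]; simp, h.trans hru⟩
            · exact ⟨u, by rw [hW'u]; simp, h⟩
          obtain ⟨c', hc1, hc2, hc3⟩ := IH G' hcard' W' ha' hb'
          have hBid : Bi G (updCol e₀ false c') d := by
            have htwo' : TwoNbrs G' d := by
              refine ⟨f', g, hf'g, ?_, ?_⟩
              · rw [hG', adj_del_iff]
                exact ⟨hdf', fun hcon => by
                  rw [he₀, Sym2.eq_iff] at hcon
                  rcases hcon with ⟨-, h⟩ | ⟨h, -⟩
                  exacts [hf'u h, hdu h]⟩
              · rw [hG', adj_del_iff]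
                exact ⟨hdg, fun hcon => by
                  rw [he₀, Sym2.eq_iff] at hcon
                  rcases hcon with ⟨-, h⟩ | ⟨h, -⟩
                  exacts [hgu h, hdu h]⟩
            exact bi_transfer (hc1 d hW'd htwo')
          refine ⟨updCol e₀ false c', ?_, ?_, ?_⟩
          · intro v hv htwo
            by_cases h1 : v = u
            · obtain rfl := h1.symm
              obtain ⟨a, hadj'⟩ := exists_del_edge_at_u (G := G) hwu.ne' htwo
              obtain ⟨a', hadj'', hcol⟩ := hc2 _ true hW'u ⟨a, hadj'⟩
              refine ⟨a', d, (adj_del_iff.1 hadj'').1, hwu.symm, ?_⟩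
              rw [col_transfer hadj'', hcol]
              have : s(u, d) = e₀ := by rw [he₀, Sym2.eq_swap]
              rw [this, updCol_self]
              simp
            · have h2 : v ≠ d := by rintro rfl; rw [hv] at hd; exact hd rfl
              exact bi_transfer (hc1 v (by rw [hW'o v h1 h2]; exact hv) (twoNbrs_del h2 h1 htwo))
          · intro v β hvW hedge
            by_cases h1 : v = d
            · obtain rfl := h1.symm
              rw [hbW] at hvW
              injection hvW with hvW
              obtain rfl := hvW.symm
              exact bi_hasCol hBid _
            · have h2 : v ≠ u := by rintro rfl; rw [hWu] at hvW; exact nomatch hvW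
              obtain ⟨a, haa⟩ := hedge
              exact hasCol_transfer (hc2 v β (by rw [hW'o v h2 h1]; exact hvW)
                ⟨a, adj_del_of_ne haa h1 h2⟩)
          · intro v β hvW hthree
            by_cases h1 : v = d
            · obtain rfl := h1.symm; exact hBid
            · have h2 : v ≠ u := by rintro rfl; rw [hWu] at hvW; exact nomatch hvW
              exact bi_transfer (hc3 v β (by rw [hW'o v h2 h1]; exact hvW)
                (threeNbrs_del h1 h2 hthree))
        · -- d has exactly two neighbours u and f
          have henum : ∀ z, G.Adj d z → z = u ∨ z = f := by
            intro z hz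
            by_contra hcon
            push_neg at hcon
            exact hth ⟨z, f, hcon.1, hfu, hcon.2, hz, hdf⟩
          have ha' : ∀ v v', v ≠ v' → W v ≠ none → W v' ≠ none → ¬ G'.Reachable v v' :=
            fun v v' hne hv hv' hr => ha v v' hne hv hv' (hmono hr)
          have hb' : ∀ v, ∃ d', W d' ≠ none ∧ G'.Reachable v d' := by
            intro v
            obtain ⟨d', hd', hr⟩ := hb v
            rcases reach_split (w := d) (u := u) hr with h | h | h
            · exact ⟨d', hd', h⟩
            · exact ⟨d, hd, h⟩
            · exact ⟨d, hd, h.trans hru.symm⟩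
          obtain ⟨c', hc1, hc2, hc3⟩ := IH G' hcard' W ha' hb'
          set z₀ : Bool := if h : ∃ a, G'.Adj u a then !(c' s(u, Classical.choose h)) else false
            with hz₀
          refine ⟨updCol e₀ z₀ c', ?_, ?_, ?_⟩
          · intro v hv htwo
            by_cases h1 : v = u
            · obtain rfl := h1.symm
              have hua : ∃ a, G'.Adj u a := exists_del_edge_at_u (G := G) hwu.ne' htwo
              set a₀ := Classical.choose hua with ha₀def
              have ha₀ : G'.Adj u a₀ := Classical.choose_spec hua
              refine ⟨a₀, d, (adj_del_iff.1 ha₀).1, hwu.symm, ?_⟩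
              rw [col_transfer ha₀]
              have hud : s(u, d) = e₀ := by rw [he₀, Sym2.eq_swap]
              rw [hud, updCol_self, hz₀, dif_pos hua]
              simp
              rfl
            · have h2 : v ≠ d := by rintro rfl; rw [hv] at hd; exact hd rfl
              exact bi_transfer (hc1 v hv (twoNbrs_del h2 h1 htwo))
          · intro v β hvW hedge
            by_cases h1 : v = d
            · obtain rfl := h1.symm
              rw [hbW] at hvW
              injection hvW with hvW
              obtain rfl := hvW.symm
              exact hasCol_transfer (hc2 _ _ hbW hedgew')
            · have h2 : v ≠ u := by rintro rfl; rw [hWu] at hvW; exact nomatch hvW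
              obtain ⟨a, haa⟩ := hedge
              exact hasCol_transfer (hc2 v β hvW ⟨a, adj_del_of_ne haa h1 h2⟩)
          · intro v β hvW hthree
            by_cases h1 : v = d
            · obtain rfl := h1.symm
              obtain ⟨a₁, a₂, a₃, h12, h13, h23, k1, k2, k3⟩ := hthree
              rcases henum a₁ k1 with rfl | rfl <;> rcases henum a₂ k2 with rfl | rfl <;>
                rcases henum a₃ k3 with rfl | rfl <;> first
                  | exact absurd rfl h12 | exact absurd rfl h13 | exact absurd rfl h23
            · have h2 : v ≠ u := by rintro rfl; rw [hWu] at hvW; exact nomatch hvW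
              exact bi_transfer (hc3 v β hvW (threeNbrs_del h1 h2 hthree))
      · -- the deleted edge is a bridge between d and u : demand u with colour b
        set W' : V → Option Bool := fun v => if v = u then some b else W v with hW'
        have hW'u : W' u = some b := by simp [hW']
        have hW'o : ∀ v, v ≠ u → W' v = W v := by intro v hv; simp [hW', hv]
        have ha' : ∀ v v', v ≠ v' → W' v ≠ none → W' v' ≠ none → ¬ G'.Reachable v v' := by
          intro v v' hne hv hv' hr
          by_cases h1 : v = u
          · obtain rfl := h1.symm
            by_cases h2 : v' = d
            · obtain rfl := h2.symm; exact hru hr.symm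
            · exact hkey v' h2 (by rwa [hW'o v' (Ne.symm hne)] at hv') hr
          · rw [hW'o v h1] at hv
            by_cases h2 : v' = u
            · obtain rfl := h2.symm
              by_cases h3 : v = d
              · obtain rfl := h3.symm; exact hru hr
              · exact hkey v h3 hv hr.symm
            · rw [hW'o v' h2] at hv'
              exact ha v v' hne hv hv' (hmono hr)
        have hb' : ∀ v, ∃ d', W' d' ≠ none ∧ G'.Reachable v d' := by
          intro v
          obtain ⟨d', hd', hr⟩ := hb v
          rcases reach_split (w := d) (u := u) hr with h | h | h
          · refine ⟨d', ?_, h⟩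
            by_cases hx : d' = u
            · rw [hx, hW'u]; simp
            · rwa [hW'o d' hx]
          · exact ⟨d, by rw [hW'o d hdu]; exact hd, h⟩
          · exact ⟨u, by rw [hW'u]; simp, h⟩
        obtain ⟨c', hc1, hc2, hc3⟩ := IH G' hcard' W' ha' hb'
        have hCold : HasCol G (updCol e₀ (!b) c') d b := by
          refine hasCol_transfer (hc2 d b ?_ hedgew')
          rw [hW'o d hdu]; exact hbW
        refine ⟨updCol e₀ (!b) c', ?_, ?_, ?_⟩
        · intro v hv htwo
          by_cases h1 : v = u
          · obtain rfl := h1.symm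
            obtain ⟨a, hadj'⟩ := exists_del_edge_at_u (G := G) hwu.ne' htwo
            obtain ⟨a', hadj'', hcol⟩ := hc2 _ b hW'u ⟨a, hadj'⟩
            refine ⟨a', d, (adj_del_iff.1 hadj'').1, hwu.symm, ?_⟩
            rw [col_transfer hadj'', hcol]
            have : s(u, d) = e₀ := by rw [he₀, Sym2.eq_swap]
            rw [this, updCol_self]
            simp
          · have h2 : v ≠ d := by rintro rfl; rw [hv] at hd; exact hd rfl
            exact bi_transfer (hc1 v (by rw [hW'o v h1]; exact hv) (twoNbrs_del h2 h1 htwo))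
        · intro v β hvW hedge
          by_cases h1 : v = d
          · obtain rfl := h1.symm
            rw [hbW] at hvW
            injection hvW with hvW
            obtain rfl := hvW.symm
            exact hCold
          · have h2 : v ≠ u := by rintro rfl; rw [hWu] at hvW; exact nomatch hvW
            obtain ⟨a, haa⟩ := hedge
            exact hasCol_transfer (hc2 v β (by rw [hW'o v h2]; exact hvW)
              ⟨a, adj_del_of_ne haa h1 h2⟩)
        · intro v β hvW hthree
          by_cases h1 : v = d
          · obtain rfl := h1.symm
            obtain ⟨a₁, haCol, hcb⟩ := hCold
            refine ⟨a₁, u, haCol, hwu, ?_⟩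
            rw [hcb, updCol_self]
            simp
          · have h2 : v ≠ u := by rintro rfl; rw [hWu] at hvW; exact nomatch hvW
            exact bi_transfer (hc3 v β (by rw [hW'o v h2]; exact hvW)
              (threeNbrs_del h1 h2 hthree))


section cutshelp
variable {G : SimpleGraph V}

lemma not_edgesAdj {a b p q : V} (h1 : a ≠ p) (h2 : a ≠ q) (h3 : b ≠ p) (h4 : b ≠ q) :
    ¬ EdgesAdj s(a, b) s(p, q) := by
  rintro ⟨-, v, hv1, hv2⟩
  rw [Sym2.mem_iff] at hv1 hv2
  rcases hv1 with rfl | rfl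
  · rcases hv2 with rfl | rfl
    exacts [h1 rfl, h2 rfl]
  · rcases hv2 with rfl | rfl
    exacts [h3 rfl, h4 rfl]

lemma not_edgesAdj_self {e : Sym2 V} : ¬ EdgesAdj e e := fun h => h.1 rfl

lemma properSepCut_symm {c : Sym2 V → ℕ} {F : Set (Sym2 V)} {x y : V}
    (h : IsProperSepCut G c F x y) : IsProperSepCut G c F y x :=
  ⟨⟨h.1.1, fun hr => h.1.2 hr.symm⟩, h.2⟩

variable [Fintype V] [DecidableRel G.Adj]

lemma bi_pair {c : Sym2 V → Bool} {x a b : V} (hdeg : G.degree x ≤ 2)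
    (ha : G.Adj x a) (hb : G.Adj x b) (hab : a ≠ b) (hbi : Bi G c x) :
    c s(x, a) ≠ c s(x, b) := by
  obtain ⟨p, q, hp, hq, hne⟩ := hbi
  have hpq : p ≠ q := fun h => hne (by rw [h])
  rcases nbr_eq_of_deg_le_two hdeg ha hb hab hp with rfl | rfl <;>
    rcases nbr_eq_of_deg_le_two hdeg ha hb hab hq with rfl | rfl
  · exact absurd rfl hpq
  · exact hne
  · exact fun h => hne h.symm
  · exact absurd rfl hpq

lemma deg3_nbrs {x : V} (h : G.degree x = 3) :
    ∃ a b u : V, a ≠ b ∧ a ≠ u ∧ b ≠ u ∧ G.Adj x a ∧ G.Adj x b ∧ G.Adj x u := by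
  classical
  have hcard : (G.neighborFinset x).card = 3 := by
    rw [G.card_neighborFinset_eq_degree]; exact h
  obtain ⟨a, b, u, hab, hau, hbu, hset⟩ := Finset.card_eq_three.1 hcard
  refine ⟨a, b, u, hab, hau, hbu, ?_, ?_, ?_⟩ <;> rw [← SimpleGraph.mem_neighborFinset, hset] <;>
    simp

lemma bi_three {c : Sym2 V → Bool} {x a b u : V} (hdeg : G.degree x ≤ 3)
    (ha : G.Adj x a) (hb : G.Adj x b) (hu : G.Adj x u)
    (hab : a ≠ b) (hau : a ≠ u) (hbu : b ≠ u) (hbi : Bi G c x) :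
    ∃ p q r : V, G.Adj x p ∧ G.Adj x q ∧ G.Adj x r ∧ p ≠ q ∧ p ≠ r ∧ q ≠ r ∧
      (∀ z, G.Adj x z → z = p ∨ z = q ∨ z = r) ∧ c s(x, p) ≠ c s(x, q) := by
  obtain ⟨p, q, hp, hq, hne⟩ := hbi
  have henum : ∀ z, G.Adj x z → z = a ∨ z = b ∨ z = u :=
    fun z hz => nbr_eq_of_deg_le_three hdeg ha hb hu hab hau hbu hz
  have hpq : p ≠ q := fun h => hne (by rw [h])
  have reord : ∀ {p q r : V}, (∀ z, G.Adj x z → z = p ∨ z = q ∨ z = r) →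
      ∀ z, G.Adj x z → z = p ∨ z = r ∨ z = q := by
    intro p q r h z hz; rcases h z hz with h' | h' | h' <;> tauto
  rcases henum p hp with rfl | rfl | rfl <;> rcases henum q hq with rfl | rfl | rfl
  · exact absurd rfl hpq
  · exact ⟨p, q, u, hp, hq, hu, hpq, hau, hbu, henum, hne⟩
  · exact ⟨p, q, b, hp, hq, hb, hpq, hab, hbu.symm,
      fun z hz => by rcases henum z hz with h | h | h <;> tauto, hne⟩
  · exact ⟨p, q, u, hp, hq, hu, hpq, hbu, hau,
      fun z hz => by rcases henum z hz with h | h | h <;> tauto, hne⟩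
  · exact absurd rfl hpq
  · exact ⟨p, q, a, hp, hq, ha, hpq, hab.symm, hau.symm,
      fun z hz => by rcases henum z hz with h | h | h <;> tauto, hne⟩
  · exact ⟨p, q, b, hp, hq, hb, hpq, hbu.symm, hab,
      fun z hz => by rcases henum z hz with h | h | h <;> tauto, hne⟩
  · exact ⟨p, q, a, hp, hq, ha, hpq, hau.symm, hab.symm,
      fun z hz => by rcases henum z hz with h | h | h <;> tauto, hne⟩
  · exact absurd rfl hpq

end cutshelp

lemma coloring_main [Fintype V] {G : SimpleGraph V} [DecidableRel G.Adj] (hconn : G.Connected)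
    (hdeg : G.maxDegree = 3) : ∃ cb : Sym2 V → Bool, ∀ v, TwoNbrs G v → Bi G cb v := by
  classical
  have hne : Nonempty V := hconn.nonempty
  obtain ⟨w₀, hw₀⟩ := G.exists_maximal_degree_vertex
  have hdeg₀ : G.degree w₀ = 3 := by rw [← hw₀, hdeg]
  set W : V → Option Bool := fun v => if v = w₀ then some false else none with hW
  have ha : ∀ v w, v ≠ w → W v ≠ none → W w ≠ none → ¬ G.Reachable v w := by
    intro v w hvw hv hw
    have h1 : v = w₀ := by by_contra h; simp [hW, h] at hv
    have h2 : w = w₀ := by by_contra h; simp [hW, h] at hw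
    exact absurd (h1.trans h2.symm) hvw
  have hb : ∀ v, ∃ d, W d ≠ none ∧ G.Reachable v d := by
    intro v
    exact ⟨w₀, by simp [hW], hconn.preconnected v w₀⟩
  obtain ⟨c, h1, h2, h3⟩ := goodCol_exists (G.edgeSet.ncard) G le_rfl W ha hb
  refine ⟨c, fun v htwo => ?_⟩
  by_cases hv : v = w₀
  · subst hv
    obtain ⟨a, b, u, hab, hau, hbu, hxa, hxb, hxu⟩ := deg3_nbrs hdeg₀
    exact h3 v false (by simp [hW]) ⟨a, b, u, hab, hau, hbu, hxa, hxb, hxu⟩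
  · exact h1 v (by simp [hW, hv]) htwo

lemma boolToNat_ne {b₁ b₂ : Bool} (h : b₁ ≠ b₂) : (cond b₁ 1 0 : ℕ) ≠ cond b₂ 1 0 := by
  cases b₁ <;> cases b₂ <;> simp_all

/-- membership of 2 in the pd-set -/
lemma two_mem [Fintype V] {G : SimpleGraph V} [DecidableRel G.Adj] (hconn : G.Connected)
    (hdeg : G.maxDegree = 3) (hind : ∀ v w, G.degree v = 3 → G.degree w = 3 → ¬ G.Adj v w) :
    ∃ c : Sym2 V → ℕ, (∀ e ∈ G.edgeSet, c e < 2) ∧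
      ∀ x y : V, x ≠ y → ∃ F, IsProperSepCut G c F x y := by
  classical
  obtain ⟨cb, hcb⟩ := coloring_main hconn hdeg
  have hle3 : ∀ v, G.degree v ≤ 3 := fun v => hdeg ▸ G.degree_le_maxDegree v
  refine ⟨fun e => cond (cb e) 1 0, fun e _ => by cases h : cb e <;> simp [h], ?_⟩
  have main : ∀ x y : V, x ≠ y → G.degree x ≤ 2 ∨ (G.degree x = 3 ∧ G.degree y = 3) →
      ∃ F, IsProperSepCut G (fun e => cond (cb e) 1 0) F x y := by
    intro x y hxy hcase
    rcases hcase with hx2 | ⟨hx3, hy3⟩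
    · -- star cut around x
      refine ⟨{e | ∃ a, G.Adj x a ∧ e = s(x, a)}, ⟨?_, ?_⟩, ?_⟩
      · rintro e ⟨a, haa, rfl⟩; exact haa
      · have := sepCut_of_cross (G := G) {x} {e | ∃ a, G.Adj x a ∧ e = s(x, a)}
          (by rintro e ⟨a, haa, rfl⟩; exact haa)
          (by rintro u w huw rfl hw; exact ⟨w, huw, rfl⟩) rfl
          (by simpa using (Ne.symm hxy))
        exact this.2
      · rintro e₁ ⟨a₁, ha₁, rfl⟩ e₂ ⟨a₂, ha₂, rfl⟩ hadj
        have hne : a₁ ≠ a₂ := by rintro rfl; exact hadj.1 rfl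
        exact boolToNat_ne (bi_pair hx2 ha₁ ha₂ hne (hcb x ⟨a₁, a₂, hne, ha₁, ha₂⟩))
    · -- both ends have degree three
      obtain ⟨a₀, b₀, u₀, hab₀, hau₀, hbu₀, hxa₀, hxb₀, hxu₀⟩ := deg3_nbrs hx3
      obtain ⟨a, b, u, hxa, hxb, hxu, hab, hau, hbu, henum, hcol⟩ :=
        bi_three (hle3 x) hxa₀ hxb₀ hxu₀ hab₀ hau₀ hbu₀
          (hcb x ⟨a₀, b₀, hab₀, hxa₀, hxb₀⟩)
      have hu2 : G.degree u ≤ 2 := by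
        have := hind x u hx3
        rcases Nat.lt_or_ge (G.degree u) 3 with h | h
        · omega
        · exact absurd hxu (this (le_antisymm (hle3 u) h))
      have hyu : y ≠ u := by rintro rfl; omega
      have hyx : y ≠ x := Ne.symm hxy
      set S : Set V := {x, u} with hS
      set F : Set (Sym2 V) :=
        {s(x, a), s(x, b)} ∪ {e | ∃ z, G.Adj u z ∧ z ∉ S ∧ e = s(u, z)} with hF
      have hFE : F ⊆ G.edgeSet := by
        rintro e ((rfl | rfl) | ⟨z, hz, -, rfl⟩)
        exacts [hxa, hxb, hz]
      have hyS : y ∉ S := by simp [hS, hyx, hyu]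
      have hxS : x ∈ S := by simp [hS]
      refine ⟨F, ⟨hFE, ?_⟩, ?_⟩
      · refine (sepCut_of_cross S F hFE ?_ hxS hyS).2
        rintro p q hpq hpS hqS
        rcases hpS with rfl | rfl
        · rcases henum q hpq with rfl | rfl | rfl
          · exact Or.inl (Or.inl rfl)
          · exact Or.inl (Or.inr rfl)
          · exact absurd (by simp [hS]) hqS
        · exact Or.inr ⟨q, hpq, hqS, rfl⟩
      · have haS : a ∉ S := by
          simp only [hS, Set.mem_insert_iff, Set.mem_singleton_iff]
          push_neg
          exact ⟨hxa.ne', hau⟩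
        have hbS : b ∉ S := by
          simp only [hS, Set.mem_insert_iff, Set.mem_singleton_iff]
          push_neg
          exact ⟨hxb.ne', hbu⟩
        have key : ∀ z, G.Adj u z → z ∉ S → ∀ w, G.Adj x w → w ∉ S →
            EdgesAdj s(x, w) s(u, z) → cond (cb s(x, w)) 1 0 ≠ cond (cb s(u, z)) 1 0 := by
          intro z hz hzS w hw hwS hadj
          have hxu' : x ≠ u := hxu.ne
          have hxz : x ≠ z := fun h => hzS (h ▸ hxS)
          have hwu : w ≠ u := fun h => hwS (by simp [hS, h])
          by_cases hwz : w = z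
          · subst hwz
            have hw2 : G.degree w ≤ 2 := by
              have := hind x w hx3
              rcases Nat.lt_or_ge (G.degree w) 3 with h | h
              · omega
              · exact absurd hw (this (le_antisymm (hle3 w) h))
            have := bi_pair hw2 hw.symm hz.symm hxu' (hcb w ⟨x, u, hxu', hw.symm, hz.symm⟩)
            rw [Sym2.eq_swap (a := w) (b := x)] at this
            rw [Sym2.eq_swap (a := w) (b := u)] at this
            exact boolToNat_ne this
          · exact absurd hadj (not_edgesAdj hxu' hxz hwu hwz)
        rintro e₁ he₁ e₂ he₂ hadj
        rcases he₁ with (rfl | rfl) | ⟨z₁, hz₁, hz₁S, rfl⟩ <;>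
          rcases he₂ with (rfl | rfl) | ⟨z₂, hz₂, hz₂S, rfl⟩
        · exact absurd hadj not_edgesAdj_self
        · exact boolToNat_ne hcol
        · exact key z₂ hz₂ hz₂S a hxa haS hadj
        · exact boolToNat_ne (Ne.symm hcol)
        · exact absurd hadj not_edgesAdj_self
        · exact key z₂ hz₂ hz₂S b hxb hbS hadj
        · exact fun h => key z₁ hz₁ hz₁S a hxa haS ⟨Ne.symm hadj.1, hadj.2.imp (fun v hv => ⟨hv.2, hv.1⟩)⟩ h.symm
        · exact fun h => key z₁ hz₁ hz₁S b hxb hbS ⟨Ne.symm hadj.1, hadj.2.imp (fun v hv => ⟨hv.2, hv.1⟩)⟩ h.symm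
        · -- two edges at u: impossible since u has degree ≤ 2
          have hz12 : z₁ ≠ z₂ := by
            rintro rfl; exact hadj.1 rfl
          have hxz₁ : x ≠ z₁ := fun h => hz₁S (h ▸ hxS)
          have hxz₂ : x ≠ z₂ := fun h => hz₂S (h ▸ hxS)
          exact absurd (three_le_degree hz₁ hz₂ hxu.symm hz12 (Ne.symm hxz₁) (Ne.symm hxz₂))
            (by omega)
  intro x y hxy
  rcases Nat.lt_or_ge (G.degree x) 3 with hx | hx
  · exact main x y hxy (Or.inl (by omega))
  · rcases Nat.lt_or_ge (G.degree y) 3 with hy | hy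
    · obtain ⟨F, hF⟩ := main y x (Ne.symm hxy) (Or.inl (by omega))
      exact ⟨F, properSepCut_symm hF⟩
    · exact main x y hxy (Or.inr ⟨le_antisymm (hle3 x) hx, le_antisymm (hle3 y) hy⟩)


section ehelp
variable {G : SimpleGraph V}

lemma matchingSepCut_symm {F : Set (Sym2 V)} {x y : V}
    (h : IsMatchingSepCut G F x y) : IsMatchingSepCut G F y x :=
  ⟨⟨h.1.1, fun hr => h.1.2 hr.symm⟩, h.2⟩

lemma mkK23 {h₁ h₂ l₁ l₂ l₃ : V} (hh : h₁ ≠ h₂) (h12 : l₁ ≠ l₂) (h13 : l₁ ≠ l₃)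
    (h23 : l₂ ≠ l₃)
    (a11 : G.Adj h₁ l₁) (a12 : G.Adj h₁ l₂) (a13 : G.Adj h₁ l₃)
    (a21 : G.Adj h₂ l₁) (a22 : G.Adj h₂ l₂) (a23 : G.Adj h₂ l₃) : HasK23 G := by
  have n11 : h₁ ≠ l₁ := a11.ne
  have n12 : h₁ ≠ l₂ := a12.ne
  have n13 : h₁ ≠ l₃ := a13.ne
  have n21 : h₂ ≠ l₁ := a21.ne
  have n22 : h₂ ≠ l₂ := a22.ne
  have n23 : h₂ ≠ l₃ := a23.ne
  refine ⟨⟨Sum.elim (![h₁, h₂]) (![l₁, l₂, l₃]), ?_⟩, ?_⟩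
  · rintro (i | i) (j | j) hij <;> simp only [Sum.elim_inl, Sum.elim_inr] at hij
    · congr 1
      fin_cases i <;> fin_cases j <;> simp_all
    · exfalso; fin_cases i <;> fin_cases j <;> simp_all
    · exfalso; fin_cases i <;> fin_cases j <;> simp_all
    · congr 1
      fin_cases i <;> fin_cases j <;> simp_all
  · generalize_proofs hinj
    rintro (i | i) (j | j) hab <;> simp only [completeBipartiteGraph_adj] at hab <;>
      simp only [Function.Embedding.coeFn_mk, Sum.elim_inl, Sum.elim_inr]
    · simp at hab
    · fin_cases i <;> fin_cases j <;> assumption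
    · fin_cases i <;> fin_cases j <;> exact (by assumption : G.Adj _ _).symm
    · simp at hab

variable [Fintype V] [DecidableRel G.Adj]

lemma deg2_pair {x : V} (h : G.degree x = 2) :
    ∃ a b : V, a ≠ b ∧ G.Adj x a ∧ G.Adj x b ∧ ∀ z, G.Adj x z → z = a ∨ z = b := by
  classical
  have hcard : (G.neighborFinset x).card = 2 := by
    rw [G.card_neighborFinset_eq_degree]; exact h
  obtain ⟨a, b, hab, hset⟩ := Finset.card_eq_two.1 hcard
  have ha : G.Adj x a := by rw [← SimpleGraph.mem_neighborFinset, hset]; simp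
  have hb : G.Adj x b := by rw [← SimpleGraph.mem_neighborFinset, hset]; simp
  exact ⟨a, b, hab, ha, hb, fun z hz => nbr_eq_of_deg_le_two (by omega) ha hb hab hz⟩

lemma deg2_other {x y : V} (h : G.degree x = 2) (hy : G.Adj x y) :
    ∃ c, G.Adj x c ∧ c ≠ y ∧ ∀ z, G.Adj x z → z = y ∨ z = c := by
  obtain ⟨a, b, hab, ha, hb, henum⟩ := deg2_pair h
  rcases henum y hy with rfl | rfl
  · exact ⟨b, hb, fun hc => hab hc.symm, fun z hz => henum z hz⟩
  · exact ⟨a, ha, hab, fun z hz => (henum z hz).symm⟩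

lemma deg3_enum {x : V} (h : G.degree x = 3) {a b u z : V} (ha : G.Adj x a) (hb : G.Adj x b)
    (hu : G.Adj x u) (hab : a ≠ b) (hau : a ≠ u) (hbu : b ≠ u) (hz : G.Adj x z) :
    z = a ∨ z = b ∨ z = u :=
  nbr_eq_of_deg_le_three (by omega) ha hb hu hab hau hbu hz

lemma deg3_other {c x : V} (h : G.degree c = 3) (hx : G.Adj c x) :
    ∃ n n', n ≠ n' ∧ x ≠ n ∧ x ≠ n' ∧ G.Adj c n ∧ G.Adj c n' ∧
      ∀ z, G.Adj c z → z = x ∨ z = n ∨ z = n' := by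
  obtain ⟨a, b, u, hab, hau, hbu, ha, hb, hu⟩ := deg3_nbrs h
  have henum : ∀ z, G.Adj c z → z = a ∨ z = b ∨ z = u := fun z hz =>
    deg3_enum h ha hb hu hab hau hbu hz
  rcases henum x hx with rfl | rfl | rfl
  · exact ⟨b, u, hbu, hab, hau, hb, hu, henum⟩
  · exact ⟨a, u, hau, fun hh => hab hh.symm, hbu, ha, hu,
      fun z hz => by rcases henum z hz with h' | h' | h' <;> tauto⟩
  · exact ⟨a, b, hab, fun hh => hau hh.symm, fun hh => hbu hh.symm, ha, hb,
      fun z hz => by rcases henum z hz with h' | h' | h' <;> tauto⟩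

lemma deg3_other2 {y n n' : V} (h : G.degree y = 3) (hn : G.Adj y n) (hn' : G.Adj y n')
    (hnn' : n ≠ n') :
    ∃ v, G.Adj y v ∧ v ≠ n ∧ v ≠ n' ∧ ∀ z, G.Adj y z → z = n ∨ z = n' ∨ z = v := by
  obtain ⟨m, m', hmm', hnm, hnm', hm, hm', henum⟩ := deg3_other h hn
  rcases henum n' hn' with rfl | rfl | rfl
  · exact absurd rfl hnn'
  · exact ⟨m', hm', fun hh => hnm' hh.symm, fun hh => hmm' hh.symm,
      fun z hz => by rcases henum z hz with h' | h' | h' <;> tauto⟩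
  · exact ⟨m, hm, fun hh => hnm hh.symm, hmm',
      fun z hz => by rcases henum z hz with h' | h' | h' <;> tauto⟩

end ehelp

lemma edgesAdj_symm {e₁ e₂ : Sym2 V} (h : EdgesAdj e₁ e₂) : EdgesAdj e₂ e₁ :=
  ⟨h.1.symm, h.2.imp fun v hv => ⟨hv.2, hv.1⟩⟩

section mcuts
variable [Fintype V] {G : SimpleGraph V} [DecidableRel G.Adj]

lemma cutA {x y : V} (hxy : x ≠ y) (hdx : G.degree x ≤ 1) :
    ∃ F, IsMatchingSepCut G F x y := by
  refine ⟨{e | ∃ a, G.Adj x a ∧ e = s(x, a)}, ⟨?_, ?_⟩, ?_⟩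
  · rintro e ⟨a, haa, rfl⟩; exact haa
  · exact (sepCut_of_cross {x} _ (by rintro e ⟨a, haa, rfl⟩; exact haa)
      (by rintro u w huw rfl hw; exact ⟨w, huw, rfl⟩) rfl (by simpa using Ne.symm hxy)).2
  · rintro e₁ ⟨a₁, h₁, rfl⟩ e₂ ⟨a₂, h₂, rfl⟩ hadj
    have hne : a₁ ≠ a₂ := by rintro rfl; exact hadj.1 rfl
    exact absurd (two_le_degree h₁ h₂ hne) (by omega)

lemma cutI2 (htri : ∀ a b c : V, G.Adj a b → G.Adj b c → G.Adj a c → False)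
    (hle3 : ∀ v : V, G.degree v ≤ 3)
    (hind3 : ∀ v w : V, G.Adj v w → G.degree v = 3 → G.degree w ≤ 2)
    (hnk : ¬ HasK23 G) {x y : V} (hadj : G.Adj x y) (hdx : G.degree x = 2) :
    ∃ F, IsMatchingSepCut G F x y := by
  classical
  obtain ⟨c, hxc, hcy0, henumx⟩ := deg2_other hdx hadj
  have hcyn : ¬ G.Adj c y := fun h => htri x c y hxc h hadj
  by_cases hc2 : G.degree c ≤ 2
  · set S : Set V := {x, c} with hS
    set F : Set (Sym2 V) := {s(x, y)} ∪ {e | ∃ z, G.Adj c z ∧ z ∉ S ∧ e = s(c, z)} with hF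
    have hFE : F ⊆ G.edgeSet := by rintro e (rfl | ⟨z, hz, -, rfl⟩); exacts [hadj, hz]
    have hyS : y ∉ S := by simp [hS, hadj.ne', Ne.symm hcy0]
    refine ⟨F, ⟨hFE, ?_⟩, ?_⟩
    · refine (sepCut_of_cross S F hFE ?_ (by simp [hS]) hyS).2
      rintro p q hpq (rfl | rfl)
      · intro hqS
        rcases henumx q hpq with rfl | rfl
        · exact Or.inl rfl
        · exact absurd (by simp [hS]) hqS
      · intro hqS
        exact Or.inr ⟨q, hpq, hqS, rfl⟩
    · have key : ∀ z, G.Adj c z → z ∉ S → ¬ EdgesAdj s(x, y) s(c, z) := by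
        intro z hz hzS
        refine not_edgesAdj hxc.ne (fun h => hzS (by simp [hS, ← h])) (Ne.symm hcy0)
          (fun h => hcyn (h ▸ hz))
      rintro e₁ (rfl | ⟨z₁, hz₁, hz₁S, rfl⟩) e₂ (rfl | ⟨z₂, hz₂, hz₂S, rfl⟩)
      · exact not_edgesAdj_self
      · exact key z₂ hz₂ hz₂S
      · exact fun h => key z₁ hz₁ hz₁S (edgesAdj_symm h)
      · intro hadj'
        have hz12 : z₁ ≠ z₂ := by rintro rfl; exact hadj'.1 rfl
        have h1 : z₁ ≠ x := fun h => hz₁S (by simp [hS, h])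
        have h2 : z₂ ≠ x := fun h => hz₂S (by simp [hS, h])
        exact absurd (three_le_degree hz₁ hz₂ hxc.symm hz12 h1 h2) (by omega)
  · have hc3 : G.degree c = 3 := le_antisymm (hle3 c) (by omega)
    obtain ⟨n, n', hnn', hxn, hxn', hcn, hcn', henumc⟩ := deg3_other hc3 hxc.symm
    have pick : ∃ m m', m ≠ m' ∧ x ≠ m ∧ x ≠ m' ∧ G.Adj c m ∧ G.Adj c m' ∧
        (∀ z, G.Adj c z → z = x ∨ z = m ∨ z = m') ∧ ¬ G.Adj m y := by
      by_cases hnb : G.Adj n y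
      · have hn'b : ¬ G.Adj n' y := by
          intro h
          exact hnk (mkK23 hcy0 hxn hxn' hnn' hxc.symm hcn hcn' hadj.symm hnb.symm h.symm)
        exact ⟨n', n, hnn'.symm, hxn', hxn, hcn', hcn,
          fun z hz => by rcases henumc z hz with h' | h' | h' <;> tauto, hn'b⟩
      · exact ⟨n, n', hnn', hxn, hxn', hcn, hcn', henumc, hnb⟩
    obtain ⟨m, m', hmm', hxm, hxm', hcm, hcm', henumc', hmy⟩ := pick
    have hdm : G.degree m ≤ 2 := hind3 c m hcm hc3
    have hmx : ¬ G.Adj m x := fun h => htri c m x hcm h hxc.symm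
    have hmn' : ¬ G.Adj m m' := fun h => htri c m m' hcm h hcm'
    have hym : y ≠ m := fun h => hcyn (h ▸ hcm)
    have hym' : y ≠ m' := fun h => hcyn (h ▸ hcm')
    set S : Set V := {x, c, m} with hS
    set F : Set (Sym2 V) := {s(x, y), s(c, m')} ∪
      {e | ∃ z, G.Adj m z ∧ z ∉ S ∧ e = s(m, z)} with hF
    have hFE : F ⊆ G.edgeSet := by
      rintro e ((rfl | rfl) | ⟨z, hz, -, rfl⟩); exacts [hadj, hcm', hz]
    have hyS : y ∉ S := by simp [hS, hadj.ne', Ne.symm hcy0, hym]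
    refine ⟨F, ⟨hFE, ?_⟩, ?_⟩
    · refine (sepCut_of_cross S F hFE ?_ (by simp [hS]) hyS).2
      rintro p q hpq (rfl | rfl | rfl) <;> intro hqS
      · rcases henumx q hpq with rfl | rfl
        · exact Or.inl (Or.inl rfl)
        · exact absurd (by simp [hS]) hqS
      · rcases henumc' q hpq with rfl | rfl | rfl
        · exact absurd (by simp [hS]) hqS
        · exact absurd (by simp [hS]) hqS
        · exact Or.inl (Or.inr rfl)
      · exact Or.inr ⟨q, hpq, hqS, rfl⟩
    · have k1 : ¬ EdgesAdj s(x, y) s(c, m') :=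
        not_edgesAdj hxc.ne hxm' (Ne.symm hcy0) hym'
      have k2 : ∀ z, G.Adj m z → z ∉ S → ¬ EdgesAdj s(x, y) s(m, z) := by
        intro z hz hzS
        exact not_edgesAdj hxm (fun h => hzS (by simp [hS, ← h])) hym (fun h => hmy (h ▸ hz))
      have k3 : ∀ z, G.Adj m z → z ∉ S → ¬ EdgesAdj s(c, m') s(m, z) := by
        intro z hz hzS
        exact not_edgesAdj hcm.ne (fun h => hzS (by simp [hS, ← h]))
          (Ne.symm hmm') (fun h => hmn' (h ▸ hz))
      rintro e₁ ((rfl | rfl) | ⟨z₁, hz₁, hz₁S, rfl⟩) e₂ ((rfl | rfl) | ⟨z₂, hz₂, hz₂S, rfl⟩)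
      · exact not_edgesAdj_self
      · exact k1
      · exact k2 z₂ hz₂ hz₂S
      · exact fun h => k1 (edgesAdj_symm h)
      · exact not_edgesAdj_self
      · exact k3 z₂ hz₂ hz₂S
      · exact fun h => k2 z₁ hz₁ hz₁S (edgesAdj_symm h)
      · exact fun h => k3 z₁ hz₁ hz₁S (edgesAdj_symm h)
      · intro hadj'
        have hz12 : z₁ ≠ z₂ := by rintro rfl; exact hadj'.1 rfl
        have h1 : z₁ ≠ c := fun h => hz₁S (by simp [hS, h])
        have h2 : z₂ ≠ c := fun h => hz₂S (by simp [hS, h])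
        exact absurd (three_le_degree hz₁ hz₂ hcm.symm hz12 h1 h2) (by omega)

end mcuts

section mcuts2
variable [Fintype V] {G : SimpleGraph V} [DecidableRel G.Adj]

lemma cutII2build (htri : ∀ a b c : V, G.Adj a b → G.Adj b c → G.Adj a c → False)
    {x y a b n n' : V}
    (hxa : G.Adj x a) (hxb : G.Adj x b) (hab : a ≠ b)
    (henumx : ∀ z, G.Adj x z → z = a ∨ z = b)
    (han : G.Adj a n) (han' : G.Adj a n') (hnn' : n ≠ n') (hxn : x ≠ n) (hxn' : x ≠ n')
    (henuma : ∀ z, G.Adj a z → z = x ∨ z = n ∨ z = n')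
    (hnb : ¬ G.Adj n b) (hyn : y ≠ n) (hxynadj : ¬ G.Adj x y) (hxy : x ≠ y)
    (hdn : G.degree n ≤ 2) :
    ∃ F, IsMatchingSepCut G F x y := by
  classical
  have hnab : ¬ G.Adj a b := fun h => htri x a b hxa h hxb
  have hya : y ≠ a := fun h => hxynadj (h ▸ hxa)
  have hnx : ¬ G.Adj n x := fun h => htri a n x han h hxa.symm
  have hnn'adj : ¬ G.Adj n n' := fun h => htri a n n' han h han'
  have hbn : b ≠ n := fun h => hnab (h ▸ han)
  have hbn' : b ≠ n' := fun h => hnab (h ▸ han')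
  set S : Set V := {x, a, n} with hS
  set F : Set (Sym2 V) := {s(x, b), s(a, n')} ∪
    {e | ∃ z, G.Adj n z ∧ z ∉ S ∧ e = s(n, z)} with hF
  have hFE : F ⊆ G.edgeSet := by
    rintro e ((rfl | rfl) | ⟨z, hz, -, rfl⟩); exacts [hxb, han', hz]
  have hyS : y ∉ S := by simp [hS, Ne.symm hxy, hya, hyn]
  refine ⟨F, ⟨hFE, ?_⟩, ?_⟩
  · refine (sepCut_of_cross S F hFE ?_ (by simp [hS]) hyS).2
    rintro p q hpq (rfl | rfl | rfl) <;> intro hqS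
    · rcases henumx q hpq with rfl | rfl
      · exact absurd (by simp [hS]) hqS
      · exact Or.inl (Or.inl rfl)
    · rcases henuma q hpq with rfl | rfl | rfl
      · exact absurd (by simp [hS]) hqS
      · exact absurd (by simp [hS]) hqS
      · exact Or.inl (Or.inr rfl)
    · exact Or.inr ⟨q, hpq, hqS, rfl⟩
  · have k1 : ¬ EdgesAdj s(x, b) s(a, n') :=
      not_edgesAdj hxa.ne hxn' (Ne.symm hab) hbn'
    have k2 : ∀ z, G.Adj n z → z ∉ S → ¬ EdgesAdj s(x, b) s(n, z) := by
      intro z hz hzS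
      exact not_edgesAdj hxn (fun h => hzS (by simp [hS, ← h])) hbn
        (fun h => hnb (h ▸ hz))
    have k3 : ∀ z, G.Adj n z → z ∉ S → ¬ EdgesAdj s(a, n') s(n, z) := by
      intro z hz hzS
      exact not_edgesAdj han.ne (fun h => hzS (by simp [hS, ← h]))
        (Ne.symm hnn') (fun h => hnn'adj (h ▸ hz))
    rintro e₁ ((rfl | rfl) | ⟨z₁, hz₁, hz₁S, rfl⟩) e₂ ((rfl | rfl) | ⟨z₂, hz₂, hz₂S, rfl⟩)
    · exact not_edgesAdj_self
    · exact k1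
    · exact k2 z₂ hz₂ hz₂S
    · exact fun h => k1 (edgesAdj_symm h)
    · exact not_edgesAdj_self
    · exact k3 z₂ hz₂ hz₂S
    · exact fun h => k2 z₁ hz₁ hz₁S (edgesAdj_symm h)
    · exact fun h => k3 z₁ hz₁ hz₁S (edgesAdj_symm h)
    · intro hadj'
      have hz12 : z₁ ≠ z₂ := by rintro rfl; exact hadj'.1 rfl
      have h1 : z₁ ≠ a := fun h => hz₁S (by simp [hS, h])
      have h2 : z₂ ≠ a := fun h => hz₂S (by simp [hS, h])
      exact absurd (three_le_degree hz₁ hz₂ han.symm hz12 h1 h2) (by omega)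

lemma cutII2 (htri : ∀ a b c : V, G.Adj a b → G.Adj b c → G.Adj a c → False)
    (hle3 : ∀ v : V, G.degree v ≤ 3)
    (hind3 : ∀ v w : V, G.Adj v w → G.degree v = 3 → G.degree w ≤ 2)
    (hnk : ¬ HasK23 G) {x y : V} (hxynadj : ¬ G.Adj x y) (hxy : x ≠ y)
    (hdx : G.degree x = 2) :
    ∃ F, IsMatchingSepCut G F x y := by
  classical
  obtain ⟨a, b, hab, hxa, hxb, henumx⟩ := deg2_pair hdx
  have hnab : ¬ G.Adj a b := fun h => htri x a b hxa h hxb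
  have simple : ∀ a' b' : V, a' ≠ b' → G.Adj x a' → G.Adj x b' →
      (∀ z, G.Adj x z → z = a' ∨ z = b') → G.degree a' ≤ 2 →
      ∃ F, IsMatchingSepCut G F x y := by
    intro a' b' hab' hxa' hxb' henumx' hda'
    have hnab' : ¬ G.Adj a' b' := fun h => htri x a' b' hxa' h hxb'
    have hya' : y ≠ a' := fun h => hxynadj (h ▸ hxa')
    set S : Set V := {x, a'} with hS
    set F : Set (Sym2 V) := {s(x, b')} ∪
      {e | ∃ z, G.Adj a' z ∧ z ∉ S ∧ e = s(a', z)} with hF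
    have hFE : F ⊆ G.edgeSet := by rintro e (rfl | ⟨z, hz, -, rfl⟩); exacts [hxb', hz]
    have hyS : y ∉ S := by simp [hS, Ne.symm hxy, hya']
    refine ⟨F, ⟨hFE, ?_⟩, ?_⟩
    · refine (sepCut_of_cross S F hFE ?_ (by simp [hS]) hyS).2
      rintro p q hpq (rfl | rfl) <;> intro hqS
      · rcases henumx' q hpq with rfl | rfl
        · exact absurd (by simp [hS]) hqS
        · exact Or.inl rfl
      · exact Or.inr ⟨q, hpq, hqS, rfl⟩
    · have k2 : ∀ z, G.Adj a' z → z ∉ S → ¬ EdgesAdj s(x, b') s(a', z) := by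
        intro z hz hzS
        exact not_edgesAdj hxa'.ne (fun h => hzS (by simp [hS, ← h])) (Ne.symm hab')
          (fun h => hnab' (h ▸ hz))
      rintro e₁ (rfl | ⟨z₁, hz₁, hz₁S, rfl⟩) e₂ (rfl | ⟨z₂, hz₂, hz₂S, rfl⟩)
      · exact not_edgesAdj_self
      · exact k2 z₂ hz₂ hz₂S
      · exact fun h => k2 z₁ hz₁ hz₁S (edgesAdj_symm h)
      · intro hadj'
        have hz12 : z₁ ≠ z₂ := by rintro rfl; exact hadj'.1 rfl
        have h1 : z₁ ≠ x := fun h => hz₁S (by simp [hS, h])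
        have h2 : z₂ ≠ x := fun h => hz₂S (by simp [hS, h])
        exact absurd (three_le_degree hz₁ hz₂ hxa'.symm hz12 h1 h2) (by omega)
  by_cases hda : G.degree a ≤ 2
  · exact simple a b hab hxa hxb henumx hda
  by_cases hdb : G.degree b ≤ 2
  · exact simple b a hab.symm hxb hxa (fun z hz => (henumx z hz).symm) hdb
  have ha3 : G.degree a = 3 := le_antisymm (hle3 a) (by omega)
  have hb3 : G.degree b = 3 := le_antisymm (hle3 b) (by omega)
  obtain ⟨p, q, hpq, hxp, hxq, hap, haq, henuma⟩ := deg3_other ha3 hxa.symm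
  obtain ⟨r, s, hrs, hxr, hxs, hbr, hbs, henumb⟩ := deg3_other hb3 hxb.symm
  by_cases c1 : ¬ G.Adj p b ∧ y ≠ p
  · exact cutII2build htri hxa hxb hab henumx hap haq hpq hxp hxq henuma c1.1 c1.2
      hxynadj hxy (hind3 a p hap ha3)
  by_cases c2 : ¬ G.Adj q b ∧ y ≠ q
  · exact cutII2build htri hxa hxb hab henumx haq hap hpq.symm hxq hxp
      (fun z hz => by rcases henuma z hz with h' | h' | h' <;> tauto) c2.1 c2.2
      hxynadj hxy (hind3 a q haq ha3)
  by_cases c3 : ¬ G.Adj r a ∧ y ≠ r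
  · exact cutII2build htri hxb hxa hab.symm (fun z hz => (henumx z hz).symm) hbr hbs hrs
      hxr hxs henumb c3.1 c3.2 hxynadj hxy (hind3 b r hbr hb3)
  by_cases c4 : ¬ G.Adj s a ∧ y ≠ s
  · exact cutII2build htri hxb hxa hab.symm (fun z hz => (henumx z hz).symm) hbs hbr hrs.symm
      hxs hxr (fun z hz => by rcases henumb z hz with h' | h' | h' <;> tauto) c4.1 c4.2
      hxynadj hxy (hind3 b s hbs hb3)
  exfalso
  push_neg at c1 c2 c3 c4
  have c1' : G.Adj p b ∨ y = p := by
    by_cases h : G.Adj p b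
    · exact Or.inl h
    · exact Or.inr (c1 h)
  have c2' : G.Adj q b ∨ y = q := by
    by_cases h : G.Adj q b
    · exact Or.inl h
    · exact Or.inr (c2 h)
  have c3' : G.Adj r a ∨ y = r := by
    by_cases h : G.Adj r a
    · exact Or.inl h
    · exact Or.inr (c3 h)
  have c4' : G.Adj s a ∨ y = s := by
    by_cases h : G.Adj s a
    · exact Or.inl h
    · exact Or.inr (c4 h)
  have hbyF : G.Adj b y ∨ False := by
    rcases c3' with hra | rfl
    · rcases c4' with hsa | rfl
      · exact Or.inr (hnk (mkK23 hab.symm hxr hxs hrs hxb.symm hbr hbs hxa.symm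
          hra.symm hsa.symm))
      · exact Or.inl hbs
    · exact Or.inl hbr
  have hby : G.Adj b y := by
    rcases hbyF with h | h
    · exact h
    · exact h.elim
  rcases c1' with hpb | rfl
  · rcases c2' with hqb | rfl
    · exact hnk (mkK23 hab hxp hxq hpq hxa.symm hap haq hxb.symm hpb.symm hqb.symm)
    · exact hnk (mkK23 hab hxp hxy hpq hxa.symm hap haq hxb.symm hpb.symm hby)
  · rcases c2' with hqb | rfl
    · exact hnk (mkK23 hab hxq hxy hpq.symm hxa.symm haq hap hxb.symm hqb.symm hby)
    · exact hpq rfl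

end mcuts2

section mcuts3
variable [Fintype V] {G : SimpleGraph V} [DecidableRel G.Adj]

lemma cutII3col (htri : ∀ a b c : V, G.Adj a b → G.Adj b c → G.Adj a c → False)
    (hle3 : ∀ v : V, G.degree v ≤ 3)
    (hind3 : ∀ v w : V, G.Adj v w → G.degree v = 3 → G.degree w ≤ 2)
    (hnk : ¬ HasK23 G) {x y n n' n'' z : V}
    (hxn : G.Adj x n) (hxn' : G.Adj x n') (hxn'' : G.Adj x n'')
    (h12 : n ≠ n') (h13 : n ≠ n'') (h23 : n' ≠ n'')
    (henumx : ∀ t, G.Adj x t → t = n ∨ t = n' ∨ t = n'')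
    (hnz : G.Adj n z) (hn'z : G.Adj n' z) (hzx : z ≠ x)
    (hxynadj : ¬ G.Adj x y) (hxy : x ≠ y) (hdx : G.degree x = 3) (hdy : G.degree y = 3) :
    ∃ F, IsMatchingSepCut G F x y := by
  classical
  have dn : G.degree n ≤ 2 := hind3 x n hxn hdx
  have dn' : G.degree n' ≤ 2 := hind3 x n' hxn' hdx
  have dn'' : G.degree n'' ≤ 2 := hind3 x n'' hxn'' hdx
  have hyn : y ≠ n := by rintro rfl; omega
  have hyn' : y ≠ n' := by rintro rfl; omega
  have hyn'' : y ≠ n'' := by rintro rfl; omega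
  have hzn'' : z ≠ n'' := fun h => htri x n n'' hxn (h ▸ hnz) hxn''
  have hzn : z ≠ n := fun h => (h ▸ hnz).ne rfl
  have hzn' : z ≠ n' := fun h => (h ▸ hn'z).ne rfl
  by_cases hzy : z = y
  · -- z = y : y is adjacent to n and n'; cut on y's side
    obtain rfl := hzy.symm
    obtain ⟨v, hyv, hvn, hvn', henumy⟩ := deg3_other2 hdy hnz.symm hn'z.symm h12
    have hvnn'' : v ≠ n'' := by
      rintro rfl
      exact hnk (mkK23 hxy h12 h13 h23 hxn hxn' hxn'' hnz.symm hn'z.symm hyv)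
    have hvx : v ≠ x := by
      rintro rfl
      exact hxynadj hyv.symm
    have dv : G.degree v ≤ 2 := hind3 y v hyv hdy
    have henumn' : ∀ t, G.Adj n' t → t = x ∨ t = y :=
      fun t ht => nbr_eq_of_deg_le_two dn' hxn'.symm hn'z hxy ht
    have hvn'adj : ¬ G.Adj v n' := by
      intro h
      rcases henumn' v h.symm with rfl | rfl
      · exact hvx rfl
      · exact hyv.ne' rfl
    set T : Set V := {y, n, v} with hT
    set F : Set (Sym2 V) := {s(y, n'), s(n, x)} ∪
      {e | ∃ t, G.Adj v t ∧ t ∉ T ∧ e = s(v, t)} with hF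
    have hFE : F ⊆ G.edgeSet := by
      rintro e ((rfl | rfl) | ⟨t, ht, -, rfl⟩); exacts [hn'z.symm, hxn.symm, ht]
    have hxT : x ∉ T := by simp [hT, hxy, Ne.symm hvx, hxn.ne]
    have sep : IsSepCut G F y x := by
      refine ⟨hFE, (sepCut_of_cross T F hFE ?_ (by simp [hT]) hxT).2⟩
      rintro p q hpq (rfl | rfl | rfl) <;> intro hqS
      · rcases henumy q hpq with rfl | rfl | rfl
        · exact absurd (by simp [hT]) hqS
        · exact Or.inl (Or.inl rfl)
        · exact absurd (by simp [hT]) hqS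
      · rcases nbr_eq_of_deg_le_two dn hxn.symm hnz hxy hpq with rfl | rfl
        · exact Or.inl (Or.inr rfl)
        · exact absurd (by simp [hT]) hqS
      · exact Or.inr ⟨q, hpq, hqS, rfl⟩
    have match' : ∀ e₁ ∈ F, ∀ e₂ ∈ F, ¬ EdgesAdj e₁ e₂ := by
      have k1 : ¬ EdgesAdj s(y, n') s(n, x) :=
        not_edgesAdj hyn (Ne.symm hxy) (Ne.symm h12) hxn'.ne'
      have k2 : ∀ t, G.Adj v t → t ∉ T → ¬ EdgesAdj s(y, n') s(v, t) := by
        intro t ht htT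
        exact not_edgesAdj hyv.ne (fun h => htT (by simp [hT, ← h])) (Ne.symm hvn')
          (fun h => hvn'adj (h ▸ ht))
      have k3 : ∀ t, G.Adj v t → t ∉ T → ¬ EdgesAdj s(n, x) s(v, t) := by
        intro t ht htT
        refine not_edgesAdj (Ne.symm hvn) (fun h => htT (by simp [hT, ← h])) (Ne.symm hvx)
          (fun h => ?_)
        have : G.Adj x v := by rw [← h] at ht; exact ht.symm
        rcases henumx v this with rfl | rfl | rfl
        · exact hvn rfl
        · exact hvn' rfl
        · exact hvnn'' rfl
      rintro e₁ ((rfl | rfl) | ⟨t₁, ht₁, ht₁T, rfl⟩) e₂ ((rfl | rfl) | ⟨t₂, ht₂, ht₂T, rfl⟩)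
      · exact not_edgesAdj_self
      · exact k1
      · exact k2 t₂ ht₂ ht₂T
      · exact fun h => k1 (edgesAdj_symm h)
      · exact not_edgesAdj_self
      · exact k3 t₂ ht₂ ht₂T
      · exact fun h => k2 t₁ ht₁ ht₁T (edgesAdj_symm h)
      · exact fun h => k3 t₁ ht₁ ht₁T (edgesAdj_symm h)
      · intro hadj'
        have ht12 : t₁ ≠ t₂ := by rintro rfl; exact hadj'.1 rfl
        have u1 : t₁ ≠ y := fun h => ht₁T (by simp [hT, h])
        have u2 : t₂ ≠ y := fun h => ht₂T (by simp [hT, h])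
        exact absurd (three_le_degree ht₁ ht₂ hyv.symm ht12 u1 u2) (by omega)
    exact ⟨F, matchingSepCut_symm ⟨sep, match'⟩⟩
  · -- z ≠ y
    set S : Set V := {x, n, n', z} with hS
    set F : Set (Sym2 V) := {s(x, n'')} ∪
      {e | ∃ t, G.Adj z t ∧ t ∉ S ∧ e = s(z, t)} with hF
    have hFE : F ⊆ G.edgeSet := by
      rintro e (rfl | ⟨t, ht, -, rfl⟩); exacts [hxn'', ht]
    have hyz : y ≠ z := fun h => hzy h.symm
    have hyS : y ∉ S := by
      simp [hS, Ne.symm hxy, hyn, hyn', hyz]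
    refine ⟨F, ⟨hFE, ?_⟩, ?_⟩
    · refine (sepCut_of_cross S F hFE ?_ (by simp [hS]) hyS).2
      rintro p q hpq (rfl | rfl | rfl | rfl) <;> intro hqS
      · rcases henumx q hpq with rfl | rfl | rfl
        · exact absurd (by simp [hS]) hqS
        · exact absurd (by simp [hS]) hqS
        · exact Or.inl rfl
      · rcases nbr_eq_of_deg_le_two dn hxn.symm hnz (fun h => hzx h.symm) hpq with rfl | rfl
        · exact absurd (by simp [hS]) hqS
        · exact absurd (by simp [hS]) hqS
      · rcases nbr_eq_of_deg_le_two dn' hxn'.symm hn'z (fun h => hzx h.symm) hpq with rfl | rfl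
        · exact absurd (by simp [hS]) hqS
        · exact absurd (by simp [hS]) hqS
      · exact Or.inr ⟨q, hpq, hqS, rfl⟩
    · have k1 : ∀ t, G.Adj z t → t ∉ S → ¬ EdgesAdj s(x, n'') s(z, t) := by
        intro t ht htT
        refine not_edgesAdj (Ne.symm hzx) (fun h => htT (by simp [hS, ← h]))
          (Ne.symm hzn'') (fun h => ?_)
        subst h
        exact hnk (mkK23 (Ne.symm hzx) h12 h13 h23 hxn hxn' hxn'' hnz.symm hn'z.symm ht)
      rintro e₁ (rfl | ⟨t₁, ht₁, ht₁S, rfl⟩) e₂ (rfl | ⟨t₂, ht₂, ht₂S, rfl⟩)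
      · exact not_edgesAdj_self
      · exact k1 t₂ ht₂ ht₂S
      · exact fun h => k1 t₁ ht₁ ht₁S (edgesAdj_symm h)
      · intro hadj'
        have ht12 : t₁ ≠ t₂ := by rintro rfl; exact hadj'.1 rfl
        have u1 : t₁ ∉ ({n, n'} : Set V) := fun h => ht₁S (by
          rcases h with rfl | rfl <;> simp [hS])
        have u2 : t₂ ∉ ({n, n'} : Set V) := fun h => ht₂S (by
          rcases h with rfl | rfl <;> simp [hS])
        have hn1 : n ≠ t₁ := fun h => u1 (by simp [← h])
        have hn'1 : n' ≠ t₁ := fun h => u1 (by simp [← h])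
        have h32 := nbr_eq_of_deg_le_three (hle3 z) hnz.symm hn'z.symm ht₁ h12 hn1 hn'1 ht₂
        rcases h32 with rfl | rfl | rfl
        · exact u2 (by simp)
        · exact u2 (by simp)
        · exact ht12 rfl
    
lemma cutII3 (htri : ∀ a b c : V, G.Adj a b → G.Adj b c → G.Adj a c → False)
    (hle3 : ∀ v : V, G.degree v ≤ 3)
    (hind3 : ∀ v w : V, G.Adj v w → G.degree v = 3 → G.degree w ≤ 2)
    (hnk : ¬ HasK23 G) {x y : V}
    (hxynadj : ¬ G.Adj x y) (hxy : x ≠ y) (hdx : G.degree x = 3) (hdy : G.degree y = 3) :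
    ∃ F, IsMatchingSepCut G F x y := by
  classical
  obtain ⟨a, b, u, hab, hau, hbu, hxa, hxb, hxu⟩ := deg3_nbrs hdx
  have henumx : ∀ t, G.Adj x t → t = a ∨ t = b ∨ t = u :=
    fun t ht => deg3_enum hdx hxa hxb hxu hab hau hbu ht
  have hadjS : ∀ w, w ∈ ({a, b, u} : Set V) → G.Adj x w ∧ G.degree w ≤ 2 := by
    rintro w (rfl | rfl | rfl)
    exacts [⟨hxa, hind3 x _ hxa hdx⟩, ⟨hxb, hind3 x _ hxb hdx⟩, ⟨hxu, hind3 x _ hxu hdx⟩]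
  by_cases hcol : ∃ z w w', z ≠ x ∧ w ≠ w' ∧ w ∈ ({a, b, u} : Set V) ∧
      w' ∈ ({a, b, u} : Set V) ∧ G.Adj w z ∧ G.Adj w' z
  · obtain ⟨z, w, w', hzx, hww', hwm, hw'm, hwz, hw'z⟩ := hcol
    rcases hwm with rfl | rfl | rfl <;> rcases hw'm with rfl | rfl | rfl
    · exact absurd rfl hww'
    · exact cutII3col htri hle3 hind3 hnk hxa hxb hxu hab hau hbu henumx hwz hw'z hzx
        hxynadj hxy hdx hdy
    · exact cutII3col htri hle3 hind3 hnk hxa hxu hxb hau hab hbu.symm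
        (fun t ht => by rcases henumx t ht with h | h | h <;> tauto) hwz hw'z hzx
        hxynadj hxy hdx hdy
    · exact cutII3col htri hle3 hind3 hnk hxb hxa hxu hab.symm hbu hau
        (fun t ht => by rcases henumx t ht with h | h | h <;> tauto) hwz hw'z hzx
        hxynadj hxy hdx hdy
    · exact absurd rfl hww'
    · exact cutII3col htri hle3 hind3 hnk hxb hxu hxa hbu hab.symm hau.symm
        (fun t ht => by rcases henumx t ht with h | h | h <;> tauto) hwz hw'z hzx
        hxynadj hxy hdx hdy
    · exact cutII3col htri hle3 hind3 hnk hxu hxa hxb hau.symm hbu.symm hab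
        (fun t ht => by rcases henumx t ht with h | h | h <;> tauto) hwz hw'z hzx
        hxynadj hxy hdx hdy
    · exact cutII3col htri hle3 hind3 hnk hxu hxb hxa hbu.symm hau.symm hab.symm
        (fun t ht => by rcases henumx t ht with h | h | h <;> tauto) hwz hw'z hzx
        hxynadj hxy hdx hdy
    · exact absurd rfl hww'
  · -- no collision : cut off the whole closed neighbourhood of x
    set S : Set V := {x, a, b, u} with hS
    set F : Set (Sym2 V) :=
      {e | ∃ w z, w ∈ ({a, b, u} : Set V) ∧ G.Adj w z ∧ z ∉ S ∧ e = s(w, z)} with hF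
    have hFE : F ⊆ G.edgeSet := by rintro e ⟨w, z, -, hwz, -, rfl⟩; exact hwz
    have hyS : y ∉ S := by
      have h1 : y ≠ a := by rintro rfl; have := (hadjS y (by simp)).2; omega
      have h2 : y ≠ b := by rintro rfl; have := (hadjS y (by simp)).2; omega
      have h3 : y ≠ u := by rintro rfl; have := (hadjS y (by simp)).2; omega
      simp [hS, Ne.symm hxy, h1, h2, h3]
    have hmem : ∀ w, w ∈ ({a, b, u} : Set V) → w ∈ S := by
      rintro w (rfl | rfl | rfl) <;> simp [hS]
    refine ⟨F, ⟨hFE, ?_⟩, ?_⟩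
    · refine (sepCut_of_cross S F hFE ?_ (by simp [hS]) hyS).2
      rintro p q hpq (rfl | rfl | rfl | rfl) <;> intro hqS
      · rcases henumx q hpq with rfl | rfl | rfl
        · exact absurd (hmem q (by simp)) hqS
        · exact absurd (hmem q (by simp)) hqS
        · exact absurd (hmem q (by simp)) hqS
      · exact ⟨p, q, by simp, hpq, hqS, rfl⟩
      · exact ⟨p, q, by simp, hpq, hqS, rfl⟩
      · exact ⟨p, q, by simp, hpq, hqS, rfl⟩
    · rintro e₁ ⟨w₁, z₁, hw₁m, hwz₁, hz₁S, rfl⟩ e₂ ⟨w₂, z₂, hw₂m, hwz₂, hz₂S, rfl⟩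
      rintro ⟨hne, v, hv1, hv2⟩
      rw [Sym2.mem_iff] at hv1 hv2
      have hxz₁ : z₁ ≠ x := fun h => hz₁S (by simp [hS, h])
      have hxz₂ : z₂ ≠ x := fun h => hz₂S (by simp [hS, h])
      rcases hv1 with rfl | rfl
      · rcases hv2 with heq | heq
        · -- w₁ = w₂
          subst heq
          have hz12 : z₁ ≠ z₂ := fun h => hne (by rw [h])
          have := three_le_degree hwz₁ hwz₂ ((hadjS v hw₁m).1.symm) hz12 hxz₁ hxz₂
          have := (hadjS v hw₁m).2
          omega
        · exact hz₂S (heq ▸ hmem v hw₁m)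
      · rcases hv2 with heq | heq
        · exact hz₁S (hmem v (heq ▸ hw₂m))
        · subst heq
          by_cases hww : w₁ = w₂
          · subst hww
            exact hne rfl
          · exact hcol ⟨v, w₁, w₂, fun h => hz₁S (by simp [hS, h]), hww, hw₁m, hw₂m,
              hwz₁, hwz₂⟩

end mcuts3

lemma one_mem [Fintype V] {G : SimpleGraph V} [DecidableRel G.Adj]
    (hdeg : G.maxDegree = 3)
    (hind : ∀ v w : V, G.degree v = 3 → G.degree w = 3 → ¬ G.Adj v w)
    (hnt : ¬ HasTriangle G) (hnk : ¬ HasK23 G) :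
    ∃ c : Sym2 V → ℕ, (∀ e ∈ G.edgeSet, c e < 1) ∧
      ∀ x y : V, x ≠ y → ∃ F, IsProperSepCut G c F x y := by
  classical
  have htri : ∀ a b c : V, G.Adj a b → G.Adj b c → G.Adj a c → False :=
    fun a b c hab hbc hac => hnt ⟨a, b, c, hab, hbc, hac⟩
  have hle3 : ∀ v, G.degree v ≤ 3 := fun v => hdeg ▸ G.degree_le_maxDegree v
  have hind3 : ∀ v w : V, G.Adj v w → G.degree v = 3 → G.degree w ≤ 2 := by
    intro v w hvw hv3
    rcases Nat.lt_or_ge (G.degree w) 3 with h | h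
    · omega
    · exact absurd hvw (hind v w hv3 (le_antisymm (hle3 w) h))
  refine ⟨fun _ => 0, fun e _ => Nat.zero_lt_one, ?_⟩
  intro x y hxy
  suffices h : ∃ F, IsMatchingSepCut G F x y by
    obtain ⟨F, hsep, hmatch⟩ := h
    exact ⟨F, hsep, fun e₁ he₁ e₂ he₂ hadj => absurd hadj (hmatch e₁ he₁ e₂ he₂)⟩
  by_cases hdx1 : G.degree x ≤ 1
  · exact cutA hxy hdx1
  by_cases hdy1 : G.degree y ≤ 1
  · obtain ⟨F, h⟩ := cutA (Ne.symm hxy) hdy1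
    exact ⟨F, matchingSepCut_symm h⟩
  by_cases hadj : G.Adj x y
  · by_cases hdx2 : G.degree x ≤ 2
    · exact cutI2 htri hle3 hind3 hnk hadj (le_antisymm hdx2 (by omega))
    · have hdx3 : G.degree x = 3 := le_antisymm (hle3 x) (by omega)
      have hdy2 : G.degree y ≤ 2 := hind3 x y hadj hdx3
      obtain ⟨F, h⟩ := cutI2 htri hle3 hind3 hnk hadj.symm (le_antisymm hdy2 (by omega))
      exact ⟨F, matchingSepCut_symm h⟩
  · by_cases hdx2 : G.degree x ≤ 2
    · exact cutII2 htri hle3 hind3 hnk hadj hxy (le_antisymm hdx2 (by omega))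
    · by_cases hdy2 : G.degree y ≤ 2
      · obtain ⟨F, h⟩ := cutII2 htri hle3 hind3 hnk (fun h' => hadj h'.symm) (Ne.symm hxy)
          (le_antisymm hdy2 (by omega))
        exact ⟨F, matchingSepCut_symm h⟩
      · exact cutII3 htri hle3 hind3 hnk hadj hxy (le_antisymm (hle3 x) (by omega))
          (le_antisymm (hle3 y) (by omega))

theorem stmt11 {V : Type*} [Fintype V] (G : SimpleGraph V) [DecidableRel G.Adj]
    (hconn : G.Connected) (hdeg : G.maxDegree = 3)
    (hind : ∀ v w : V, G.degree v = 3 → G.degree w = 3 → ¬ G.Adj v w) :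
    (HasTriangle G ∨ HasK23 G → pd G = 2) ∧
      (¬ (HasTriangle G ∨ HasK23 G) → pd G = 1) := by
  classical
  have hpd : pd G = sInf {k | ∃ c : Sym2 V → ℕ, (∀ e ∈ G.edgeSet, c e < k) ∧
      ∀ x y : V, x ≠ y → ∃ F, IsProperSepCut G c F x y} := rfl
  set Spd := {k | ∃ c : Sym2 V → ℕ, (∀ e ∈ G.edgeSet, c e < k) ∧
    ∀ x y : V, x ≠ y → ∃ F, IsProperSepCut G c F x y} with hSpd
  have hNE : Nonempty V := hconn.nonempty
  obtain ⟨w₀, hw₀⟩ := G.exists_maximal_degree_vertex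
  have hw3 : G.degree w₀ = 3 := by rw [← hw₀]; exact hdeg
  have hedge : ∃ e, e ∈ G.edgeSet := by
    obtain ⟨a, b, u, -, -, -, ha, -, -⟩ := deg3_nbrs hw3
    exact ⟨s(w₀, a), ha⟩
  have h0 : 0 ∉ Spd := by
    rintro ⟨c, hc, -⟩
    obtain ⟨e, he⟩ := hedge
    exact absurd (hc e he) (by omega)
  rw [hpd]
  constructor
  · intro hTK
    have h2 : 2 ∈ Spd := two_mem hconn hdeg hind
    have h1 : 1 ∉ Spd := by
      intro h1
      rcases hTK with ht | hk
      · exact one_not_mem_triangle ht h1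
      · exact one_not_mem_K23 hk h1
    have hne : Spd.Nonempty := ⟨2, h2⟩
    have hmem := Nat.sInf_mem hne
    have hle := Nat.sInf_le h2
    have hn0 : sInf Spd ≠ 0 := fun h => h0 (h ▸ hmem)
    have hn1 : sInf Spd ≠ 1 := fun h => h1 (h ▸ hmem)
    omega
  · intro hTK
    have h1 : 1 ∈ Spd := one_mem hdeg hind (fun h => hTK (Or.inl h)) (fun h => hTK (Or.inr h))
    have hne : Spd.Nonempty := ⟨1, h1⟩
    have hmem := Nat.sInf_mem hne
    have hle := Nat.sInf_le h1
    have hn0 : sInf Spd ≠ 0 := fun h => h0 (h ▸ hmem)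
    omega
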